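/- Consequently, the longest-time-to-go-first policy maximises time to failure: for any reference signal P^r and any initial state x, Θ_{p̄, z*}(P^r) ≥ Θ_{p̄, z̃}(P^r), i.e., the supremum of times t such that the truncated reference P^r_{[0,t)} is feasible along the policy's trajectory is at least that along any other admissible trajectory. -/

import Mathlib

open Set

/-- A power reference signal `Pr` is feasible for devices with maximum powers `pbar`
and initial times-to-go `x`. -/
def Feasible (n : ℕ) (pbar x : Fin n → ℝ) (Pr : ℝ → ℝ) : Prop :=
  ∃ u z : ℝ → Fin n → ℝ,
    (∀ i, z 0 i = x i) ∧
    (∀ t, 0 ≤ t → ∀ i, u t i ∈ Set.Icc 0 (pbar i)) ∧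
    (∀ t, 0 ≤ t → ∑ i, u t i = Pr t) ∧
    (∀ t, 0 ≤ t → ∀ i, HasDerivAt (fun s => z s i) (-(u t i) / pbar i) t) ∧
    (∀ t, 0 ≤ t → ∀ i, 0 ≤ z t i)

/-- Truncation of a reference signal to `[0, t)`. -/
noncomputable def trunc (Pr : ℝ → ℝ) (t : ℝ) : ℝ → ℝ :=
  fun τ => if τ ∈ Set.Ico 0 t then Pr τ else 0

/-- Time to failure: supremum of times `t` such that the truncated reference is feasible. -/
noncomputable def timeToFailure (n : ℕ) (pbar x : Fin n → ℝ) (Pr : ℝ → ℝ) : ENNReal :=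
  ⨆ t ∈ {t : ℝ | 0 ≤ t ∧ Feasible n pbar x (trunc Pr t)}, ENNReal.ofReal t

/-- Maximum instantaneous power available in state `x`. -/
noncomputable def availPower (n : ℕ) (pbar x : Fin n → ℝ) : ℝ :=
  ∑ i ∈ Finset.univ.filter (fun i => 0 < x i), pbar i

/-- The longest-time-to-go-first (waterfall) policy: device `i` (if nonempty) runs at
the common fraction of maximum power of its equal-time-to-go group, where the group's
fraction saturates the request left over by all strictly higher groups. -/
noncomputable def kappa (n : ℕ) (pbar x : Fin n → ℝ) (Pr : ℝ) : Fin n → ℝ :=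
  fun i =>
    if 0 < x i then
      pbar i * max 0 (min 1
        ((Pr - ∑ j ∈ Finset.univ.filter (fun j => x i < x j), pbar j) /
          (∑ j ∈ Finset.univ.filter (fun j => x j = x i), pbar j)))
    else 0

/-- Closed-loop dynamics under the policy `kappa`. -/
def ClosedLoop (n : ℕ) (pbar : Fin n → ℝ) (Pr : ℝ → ℝ) (z : ℝ → Fin n → ℝ) : Prop :=
  ∀ t, 0 ≤ t → ∀ i,
    HasDerivAt (fun s => z s i) (-(kappa n pbar (z t) (Pr t) i) / pbar i) t

/-- A state trajectory fulfils a reference signal (for all `t ≥ 0`). -/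
def Fulfils (n : ℕ) (pbar : Fin n → ℝ) (Pr : ℝ → ℝ) (z : ℝ → Fin n → ℝ) : Prop :=
  ∃ u : ℝ → Fin n → ℝ,
    (∀ t, 0 ≤ t → ∀ i, u t i ∈ Set.Icc 0 (pbar i)) ∧
    (∀ t, 0 ≤ t → ∑ i, u t i = Pr t) ∧
    (∀ t, 0 ≤ t → ∀ i, HasDerivAt (fun s => z s i) (-(u t i) / pbar i) t) ∧
    (∀ t, 0 ≤ t → ∀ i, 0 ≤ z t i)

/-- A state trajectory fulfils a reference signal on `[0, T]`. -/
def FulfilsOn (n : ℕ) (pbar : Fin n → ℝ) (Pr : ℝ → ℝ) (z : ℝ → Fin n → ℝ) (T : ℝ) : Prop :=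
  ∃ u : ℝ → Fin n → ℝ,
    (∀ s ∈ Set.Icc 0 T, ∀ i, u s i ∈ Set.Icc 0 (pbar i)) ∧
    (∀ s ∈ Set.Icc 0 T, ∑ i, u s i = Pr s) ∧
    (∀ s ∈ Set.Icc 0 T, ∀ i, HasDerivAt (fun r => z r i) (-(u s i) / pbar i) s) ∧
    (∀ s ∈ Set.Icc 0 T, ∀ i, 0 ≤ z s i)

/-- Closed-loop dynamics under the policy `kappa`, on `[0, T]`. -/
def ClosedLoopOn (n : ℕ) (pbar : Fin n → ℝ) (Pr : ℝ → ℝ) (z : ℝ → Fin n → ℝ) (T : ℝ) : Prop :=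
  ∀ s ∈ Set.Icc 0 T, ∀ i,
    HasDerivAt (fun r => z r i) (-(kappa n pbar (z s) (Pr s) i) / pbar i) s

set_option maxHeartbeats 1000000

section TTFAux
open Finset

namespace TTF

variable {n : ℕ}

lemma min_sub_eq (a c b : ℝ) : min (a - c) b = min a (b + c) - c := by
  rcases le_total a (b + c) with h | h
  · rw [min_eq_left (by linarith), min_eq_left h]
  · rw [min_eq_right (by linarith), min_eq_right h]; ring

lemma min_add_sub_min (z B c : ℝ) (hc : 0 ≤ c) :
    min z (B + c) - min z B = min (max (z - B) 0) c := by
  rcases le_total z B with h | h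
  · rw [min_eq_left (by linarith), min_eq_left h, max_eq_right (by linarith),
      min_eq_left hc]; ring
  · rcases le_total z (B + c) with h' | h'
    · rw [min_eq_left h', min_eq_right h, max_eq_left (by linarith),
        min_eq_left (by linarith)]
    · rw [min_eq_right h', min_eq_right h, max_eq_left (by linarith),
        min_eq_right (by linarith)]; ring

lemma min_min_of_le (a h c : ℝ) (hch : c ≤ h) : min (min a h) c = min a c := by
  rcases le_total a c with h1 | h1
  · rw [min_eq_left h1, min_eq_left (min_le_of_left_le h1)]
    exact min_eq_left (h1.trans hch)
  · rw [min_eq_right h1]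
    rcases le_total a h with h2 | h2
    · rw [min_eq_left h2, min_eq_right h1]
    · rw [min_eq_right h2, min_eq_right hch]

lemma mul_min' (p a b : ℝ) (hp : 0 ≤ p) : p * min a b = min (p * a) (p * b) := by
  rcases le_total a b with h | h
  · rw [min_eq_left h, min_eq_left (by nlinarith)]
  · rw [min_eq_right h, min_eq_right (by nlinarith)]

lemma min_eq_add_min_zero (a b : ℝ) : min a b = a + min 0 (b - a) := by
  rcases le_total a b with h | h
  · rw [min_eq_left h, min_eq_left (by linarith)]; ring
  · rw [min_eq_right h, min_eq_right (by linarith)]; ring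

lemma sq_plus_bound (t m s : ℝ) :
    (max (t + s - m) 0)^2 ≤ (max (t - m) 0)^2 + 2 * (max (t - m) 0) * s + s^2 := by
  rcases le_total (t - m) 0 with h | h
  · rw [max_eq_right h]
    rcases le_total (t + s - m) 0 with h' | h'
    · rw [max_eq_right h']; nlinarith
    · rw [max_eq_left h']; nlinarith
  · rw [max_eq_left h]
    rcases le_total (t + s - m) 0 with h' | h'
    · rw [max_eq_right h']; nlinarith
    · rw [max_eq_left h']; nlinarith

lemma abs_min_sub_min (a b c : ℝ) : |min a c - min b c| ≤ |a - b| := by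
  have h1 : a - b ≤ |a - b| := le_abs_self _
  have h2 : -(|a - b|) ≤ a - b := neg_abs_le _
  have ha := abs_nonneg (a - b)
  rw [abs_le]
  rcases le_total a c with h | h
  · rcases le_total b c with h' | h'
    · rw [min_eq_left h, min_eq_left h']
      constructor <;> linarith
    · rw [min_eq_left h, min_eq_right h']
      constructor <;> linarith
  · rcases le_total b c with h' | h'
    · rw [min_eq_right h, min_eq_left h']
      constructor <;> linarith
    · rw [min_eq_right h, min_eq_right h']
      constructor <;> linarith

/-- Comparison principle: continuous function with one-sided slope bounded below by
`-ε` for every `ε` stays nonnegative. -/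
lemma comparison {g : ℝ → ℝ} {T : ℝ} (hT : 0 ≤ T) (hcont : Continuous g) (hg0 : g 0 = 0)
    (hslope : ∀ s, 0 ≤ s → s < T → ∀ ε : ℝ, 0 < ε → ∃ h₁ > 0, ∀ h : ℝ, 0 < h → h ≤ h₁ →
      s + h ≤ T → g s - ε * h ≤ g (s + h)) :
    0 ≤ g T := by
  by_contra hneg
  push_neg at hneg
  have hT1 : 0 < T + 1 := by linarith
  set ε := -(g T) / (T + 1) with hε
  have hε0 : 0 < ε := div_pos (by linarith) hT1
  set A := {s : ℝ | s ∈ Icc 0 T ∧ g s + ε * s < 0} with hA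
  have hTA : T ∈ A := by
    constructor
    · exact ⟨hT, le_refl T⟩
    · rw [hε]
      have : g T + -(g T) / (T + 1) * T = g T * (1 / (T+1)) := by field_simp; ring
      rw [this]
      apply mul_neg_of_neg_of_pos hneg
      positivity
  have hAne : A.Nonempty := ⟨T, hTA⟩
  have hAbdd : BddBelow A := ⟨0, fun s hs => hs.1.1⟩
  set c := sInf A with hc
  have hc0 : 0 ≤ c := le_csInf hAne fun s hs => hs.1.1
  have hcT : c ≤ T := csInf_le hAbdd hTA
  have hlow : ∀ σ, 0 ≤ σ → σ < c → 0 ≤ g σ + ε * σ := by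
    intro σ hσ0 hσc
    by_contra hσ
    push_neg at hσ
    have : σ ∈ A := ⟨⟨hσ0, le_trans hσc.le hcT⟩, hσ⟩
    exact absurd (csInf_le hAbdd this) (not_le.2 hσc)
  have hgc : g c + ε * c ≤ 0 := by
    have hmem : c ∈ closure A := csInf_mem_closure hAne hAbdd
    have hsub : closure A ⊆ {s : ℝ | g s + ε * s ≤ 0} := by
      apply closure_minimal
      · intro s hs; exact hs.2.le
      · exact isClosed_le (hcont.add (continuous_const.mul continuous_id)) continuous_const
    exact hsub hmem
  rcases lt_or_eq_of_le hgc with hlt | heq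
  · -- strict: contradiction with left limits
    have hcpos : 0 < c := by
      rcases eq_or_lt_of_le hc0 with h | h
      · exfalso; rw [← h] at hlt; simp [hg0] at hlt
      · exact h
    have htend : Filter.Tendsto (fun s => g s + ε * s) (nhdsWithin c (Iio c))
        (nhds (g c + ε * c)) :=
      ((hcont.add (continuous_const.mul continuous_id)).tendsto c).mono_left
        nhdsWithin_le_nhds
    have hev : ∀ᶠ s in nhdsWithin c (Iio c), 0 ≤ g s + ε * s := by
      filter_upwards [Ioo_mem_nhdsLT_of_mem (show c ∈ Ioc 0 c from ⟨hcpos, le_refl c⟩)]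
        with σ hσ
      exact hlow σ hσ.1.le hσ.2
    have := ge_of_tendsto htend hev
    linarith
  · -- touching: use the slope property to push past c
    have hcltT : c < T := by
      rcases eq_or_lt_of_le hcT with h | h
      · exfalso
        rw [h] at heq
        have := hTA.2
        linarith
      · exact h
    obtain ⟨h₁, hh₁0, hh₁⟩ := hslope c hc0 hcltT (ε/2) (by linarith)
    set η := min h₁ (T - c) with hη
    have hη0 : 0 < η := lt_min hh₁0 (by linarith)
    obtain ⟨a, haA, halt⟩ := exists_lt_of_csInf_lt hAne (show sInf A < c + η by rw [← hc]; linarith)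
    have hac : c ≤ a := csInf_le hAbdd haA
    rcases eq_or_lt_of_le hac with h | h
    · rw [← h] at haA
      have := haA.2
      linarith
    · set h' := a - c with hh'
      have hh'0 : 0 < h' := by rw [hh']; linarith
      have hh'1 : h' ≤ h₁ := by
        rw [hh']
        have : η ≤ h₁ := min_le_left _ _
        linarith
      have hh'T : c + h' ≤ T := haA.1.2.trans_eq' (by rw [hh']; ring)
      have := hh₁ h' hh'0 hh'1 hh'T
      have hga : g (c + h') + ε * (c + h') < 0 := by
        have : c + h' = a := by rw [hh']; ring
        rw [this]
        exact haA.2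
      nlinarith [hε0, hh'0]

lemma kappa_nonneg (pbar x : Fin n → ℝ) (hp : ∀ i, 0 < pbar i) (ρ : ℝ) (i : Fin n) :
    0 ≤ kappa n pbar x ρ i := by
  unfold kappa
  split_ifs
  · exact mul_nonneg (hp i).le (le_max_left _ _)
  · exact le_refl 0

lemma kappa_le (pbar x : Fin n → ℝ) (hp : ∀ i, 0 < pbar i) (ρ : ℝ) (i : Fin n) :
    kappa n pbar x ρ i ≤ pbar i := by
  unfold kappa
  split_ifs
  · have h1 : max 0 (min 1 ((ρ - ∑ j ∈ Finset.univ.filter (fun j => x i < x j), pbar j) /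
        (∑ j ∈ Finset.univ.filter (fun j => x j = x i), pbar j))) ≤ 1 :=
      max_le zero_le_one (min_le_left _ _)
    nlinarith [hp i]
  · exact (hp i).le

lemma kappa_zero (pbar x : Fin n → ℝ) (ρ : ℝ) (i : Fin n) (h : ¬ 0 < x i) :
    kappa n pbar x ρ i = 0 := by
  unfold kappa; rw [if_neg h]

lemma clamp_formula (ρ H P : ℝ) (hP : 0 < P) :
    P * max 0 (min 1 ((ρ - H) / P)) = min ρ (H + P) - min ρ H := by
  rcases le_total ρ H with h | h
  · have e1 : min ρ (H + P) = ρ := min_eq_left (by linarith)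
    have e2 : min ρ H = ρ := min_eq_left h
    have h2 : (ρ - H) / P ≤ 0 := div_nonpos_iff.2 (Or.inr ⟨by linarith, hP.le⟩)
    have e3 : max 0 (min 1 ((ρ - H) / P)) = 0 :=
      max_eq_left (le_trans (min_le_right _ _) h2)
    rw [e1, e2, e3]
    ring
  · rcases le_total ρ (H + P) with h' | h'
    · have e1 : min ρ (H + P) = ρ := min_eq_left h'
      have e2 : min ρ H = H := min_eq_right h
      have hq0 : 0 ≤ (ρ - H) / P := div_nonneg (by linarith) hP.le
      have hq1 : (ρ - H) / P ≤ 1 := (div_le_one hP).2 (by linarith)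
      have e3 : max 0 (min 1 ((ρ - H) / P)) = (ρ - H) / P := by
        rw [min_eq_right hq1, max_eq_right hq0]
      rw [e1, e2, e3]
      field_simp
    · have e1 : min ρ (H + P) = H + P := min_eq_right h'
      have e2 : min ρ H = H := min_eq_right (by linarith)
      have h1 : (1:ℝ) ≤ (ρ - H) / P := (one_le_div hP).2 (by linarith)
      have e3 : max 0 (min 1 ((ρ - H) / P)) = 1 := by
        rw [min_eq_left h1, max_eq_right zero_le_one]
      rw [e1, e2, e3]
      ring

/-- The waterfall gives a whole equal-value group the clamp of the leftover demand. -/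
lemma kappa_group (pbar x : Fin n → ℝ) (hp : ∀ i, 0 < pbar i) (ρ v : ℝ) (hv : 0 < v)
    (hne : (Finset.univ.filter (fun i => x i = v)).Nonempty) :
    ∑ i ∈ Finset.univ.filter (fun i => x i = v), kappa n pbar x ρ i
      = min ρ ((∑ j ∈ Finset.univ.filter (fun j => v < x j), pbar j)
          + ∑ j ∈ Finset.univ.filter (fun j => x j = v), pbar j)
        - min ρ (∑ j ∈ Finset.univ.filter (fun j => v < x j), pbar j) := by
  set H := ∑ j ∈ Finset.univ.filter (fun j => v < x j), pbar j with hH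
  set P := ∑ j ∈ Finset.univ.filter (fun j => x j = v), pbar j with hPdef
  have hP : 0 < P := Finset.sum_pos (fun i _ => hp i) hne
  have key : ∀ i ∈ Finset.univ.filter (fun i => x i = v),
      kappa n pbar x ρ i = pbar i * max 0 (min 1 ((ρ - H) / P)) := by
    intro i hi
    have hxi : x i = v := (Finset.mem_filter.1 hi).2
    unfold kappa
    rw [if_pos (by rw [hxi]; exact hv)]
    have e1 : Finset.univ.filter (fun j => x i < x j) = Finset.univ.filter (fun j => v < x j) := by
      apply Finset.filter_congr; intro j _; rw [hxi]
    have e2 : Finset.univ.filter (fun j => x j = x i) = Finset.univ.filter (fun j => x j = v) := by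
      apply Finset.filter_congr; intro j _; rw [hxi]
    rw [e1, e2]
  rw [Finset.sum_congr rfl key, ← Finset.sum_mul]
  exact clamp_formula ρ H P hP

/-- Waterfall saturates from the top: the total power to devices at level `≥ c` is
`min ρ (capacity above c)`. -/
lemma kappa_sum_above (pbar x : Fin n → ℝ) (hp : ∀ i, 0 < pbar i) (ρ : ℝ) (hρ : 0 ≤ ρ) :
    ∀ N : ℕ, ∀ c : ℝ, 0 < c → (Finset.univ.filter (fun i => c ≤ x i)).card ≤ N →
      ∑ i ∈ Finset.univ.filter (fun i => c ≤ x i), kappa n pbar x ρ i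
        = min ρ (∑ i ∈ Finset.univ.filter (fun i => c ≤ x i), pbar i) := by
  intro N
  induction N with
  | zero =>
    intro c _ hcard
    have he : Finset.univ.filter (fun i => c ≤ x i) = ∅ := Finset.card_eq_zero.1 (Nat.le_zero.1 hcard)
    rw [he]
    simp [min_eq_right hρ]
  | succ N ih =>
    intro c hc hcard
    by_cases hne : (Finset.univ.filter (fun i => c ≤ x i)).Nonempty
    · obtain ⟨i₀, hi₀S, hmin⟩ := Finset.exists_min_image _ x hne
      set m := x i₀ with hm
      have hcm : c ≤ m := (Finset.mem_filter.1 hi₀S).2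
      have hm0 : 0 < m := lt_of_lt_of_le hc hcm
      have hset : Finset.univ.filter (fun i => c ≤ x i)
          = Finset.univ.filter (fun i => x i = m) ∪ Finset.univ.filter (fun i => m < x i) := by
        ext i
        simp only [Finset.mem_filter, Finset.mem_union, Finset.mem_univ, true_and]
        constructor
        · intro h
          rcases eq_or_lt_of_le (hmin i (Finset.mem_filter.2 ⟨Finset.mem_univ _, h⟩)) with h' | h'
          · exact Or.inl h'.symm
          · exact Or.inr h'
        · rintro (h | h)
          · rw [h]; exact hcm
          · exact hcm.trans h.le
      have hdisj : Disjoint (Finset.univ.filter (fun i => x i = m))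
          (Finset.univ.filter (fun i => m < x i)) := by
        rw [Finset.disjoint_filter]
        intro i _ h1 h2
        rw [h1] at h2; exact lt_irrefl m h2
      have hgrpne : (Finset.univ.filter (fun i => x i = m)).Nonempty :=
        ⟨i₀, Finset.mem_filter.2 ⟨Finset.mem_univ _, rfl⟩⟩
      have hupper : ∑ i ∈ Finset.univ.filter (fun i => m < x i), kappa n pbar x ρ i
          = min ρ (∑ i ∈ Finset.univ.filter (fun i => m < x i), pbar i) := by
        by_cases hne' : (Finset.univ.filter (fun i => m < x i)).Nonempty
        · obtain ⟨i₁, hi₁S, hmin'⟩ := Finset.exists_min_image _ x hne'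
          have hmi₁ : m < x i₁ := (Finset.mem_filter.1 hi₁S).2
          have hset' : Finset.univ.filter (fun i => m < x i)
              = Finset.univ.filter (fun i => x i₁ ≤ x i) := by
            ext i
            simp only [Finset.mem_filter, Finset.mem_univ, true_and]
            constructor
            · intro h; exact hmin' i (Finset.mem_filter.2 ⟨Finset.mem_univ _, h⟩)
            · intro h; exact lt_of_lt_of_le hmi₁ h
          have hss : Finset.univ.filter (fun i => m < x i) ⊂ Finset.univ.filter (fun i => c ≤ x i) := by
            constructor
            · intro i hi
              exact Finset.mem_filter.2 ⟨Finset.mem_univ _,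
                hcm.trans (Finset.mem_filter.1 hi).2.le⟩
            · intro hsub
              have := hsub hi₀S
              have h2 := (Finset.mem_filter.1 this).2
              exact lt_irrefl m h2
          have hcard' : (Finset.univ.filter (fun i => x i₁ ≤ x i)).card ≤ N := by
            rw [← hset']
            have := Finset.card_lt_card hss
            omega
          rw [hset']
          exact ih (x i₁) (hm0.trans hmi₁) hcard'
        · rw [Finset.not_nonempty_iff_eq_empty.1 hne']
          simp [min_eq_right hρ]
      rw [hset, Finset.sum_union hdisj, Finset.sum_union hdisj,
        kappa_group pbar x hp ρ m hm0 hgrpne, hupper]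
      ring
    · rw [Finset.not_nonempty_iff_eq_empty.1 hne]
      simp [min_eq_right hρ]

/-- Total policy power never exceeds the request. -/
lemma kappa_total_le (pbar x : Fin n → ℝ) (hp : ∀ i, 0 < pbar i) (ρ : ℝ) (hρ : 0 ≤ ρ) :
    ∑ i, kappa n pbar x ρ i ≤ ρ := by
  rw [← Finset.sum_filter_add_sum_filter_not Finset.univ (fun i => 0 < x i)]
  have h2 : ∑ i ∈ Finset.univ.filter (fun i => ¬ 0 < x i), kappa n pbar x ρ i = 0 :=
    Finset.sum_eq_zero fun i hi => kappa_zero pbar x ρ i (Finset.mem_filter.1 hi).2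
  rw [h2, add_zero]
  by_cases hne : (Finset.univ.filter (fun i => 0 < x i)).Nonempty
  · obtain ⟨i₀, hi₀S, hmin⟩ := Finset.exists_min_image _ x hne
    have hset : Finset.univ.filter (fun i => 0 < x i)
        = Finset.univ.filter (fun i => x i₀ ≤ x i) := by
      ext i
      simp only [Finset.mem_filter, Finset.mem_univ, true_and]
      constructor
      · intro h; exact hmin i (Finset.mem_filter.2 ⟨Finset.mem_univ _, h⟩)
      · intro h; exact lt_of_lt_of_le (Finset.mem_filter.1 hi₀S).2 h
    rw [hset,
      kappa_sum_above pbar x hp ρ hρ (Finset.univ.filter (fun i => x i₀ ≤ x i)).card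
        (x i₀) (Finset.mem_filter.1 hi₀S).2 (le_refl _)]
    exact min_le_left _ _
  · rw [Finset.not_nonempty_iff_eq_empty.1 hne]
    simp [hρ]

noncomputable def Wf (n : ℕ) (pbar x : Fin n → ℝ) (b : ℝ) : ℝ := ∑ i, pbar i * min (x i) b

/-- The one-step ("diamond") inequality: the waterfall policy loses no more truncated
energy than any admissible control, up to the endpoint minimum. -/
theorem diamond (pbar : Fin n → ℝ) (hp : ∀ i, 0 < pbar i)
    (x w u : Fin n → ℝ) (ρ : ℝ)
    (hu0 : ∀ i, 0 ≤ u i) (hu1 : ∀ i, u i ≤ pbar i) (hρs : ∑ i, u i = ρ)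
    (b h : ℝ) (hb : 0 ≤ b) (hh : 0 < h)
    (SEPx : ∀ i j, b < x i → x i < b + h → b < x j → x j < b + h → x i = x j)
    (SEPw : ∀ i j, b < w i → w i < b + h → b < w j → w j < b + h → w i = w j)
    (SEPxw : ∀ i j, b < x i → x i < b + h → b < w j → w j < b + h → x i = w j) :
    min (Wf n pbar x b - Wf n pbar w b) (Wf n pbar x (b+h) - Wf n pbar w (b+h))
      ≤ (∑ i, pbar i * min (x i - kappa n pbar x ρ i * h / pbar i) b)
        - ∑ i, pbar i * min (w i - u i * h / pbar i) b := by
  have hρ0 : 0 ≤ ρ := hρs ▸ Finset.sum_nonneg (fun i _ => hu0 i)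
  set κ := kappa n pbar x ρ with hκdef
  have hκ0 : ∀ i, 0 ≤ κ i := fun i => kappa_nonneg pbar x hp ρ i
  have hκle : ∀ i, κ i ≤ pbar i := fun i => kappa_le pbar x hp ρ i
  set P : Fin n → ℝ := fun i => pbar i * min (max (x i - b) 0) h with hPdef
  set Q : Fin n → ℝ := fun i => pbar i * min (max (w i - b) 0) h with hQdef
  -- Per-index identity, x side
  have idx : ∀ i, pbar i * min (x i - κ i * h / pbar i) b
      = pbar i * min (x i) b + min (P i) (κ i * h) - κ i * h := by
    intro i
    have hpi := hp i
    set a := κ i * h / pbar i with hadef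
    have ha0 : 0 ≤ a := div_nonneg (mul_nonneg (hκ0 i) hh.le) hpi.le
    have hah : a ≤ h := by
      rw [hadef, div_le_iff₀ hpi]
      nlinarith [hκle i, hh.le]
    have e1 : min (x i - a) b = min (x i) (b + a) - a := min_sub_eq _ _ _
    have e2 : min (x i) (b + a) = min (x i) b + min (max (x i - b) 0) a := by
      have := min_add_sub_min (x i) b a ha0
      linarith
    have e3 : min (max (x i - b) 0) a = min (min (max (x i - b) 0) h) a :=
      (min_min_of_le _ _ _ hah).symm
    have e4 : pbar i * a = κ i * h := by
      rw [hadef]; field_simp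
    have e5 : pbar i * (min (min (max (x i - b) 0) h) a) = min (P i) (κ i * h) := by
      rw [mul_min' _ _ _ hpi.le, e4]
    rw [e1, e2, e3, mul_sub, mul_add, e5, e4]
  have idw : ∀ i, pbar i * min (w i - u i * h / pbar i) b
      = pbar i * min (w i) b + min (Q i) (u i * h) - u i * h := by
    intro i
    have hpi := hp i
    set a := u i * h / pbar i with hadef
    have ha0 : 0 ≤ a := div_nonneg (mul_nonneg (hu0 i) hh.le) hpi.le
    have hah : a ≤ h := by
      rw [hadef, div_le_iff₀ hpi]
      nlinarith [hu1 i, hh.le]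
    have e1 : min (w i - a) b = min (w i) (b + a) - a := min_sub_eq _ _ _
    have e2 : min (w i) (b + a) = min (w i) b + min (max (w i - b) 0) a := by
      have := min_add_sub_min (w i) b a ha0
      linarith
    have e3 : min (max (w i - b) 0) a = min (min (max (w i - b) 0) h) a :=
      (min_min_of_le _ _ _ hah).symm
    have e4 : pbar i * a = u i * h := by
      rw [hadef]; field_simp
    have e5 : pbar i * (min (min (max (w i - b) 0) h) a) = min (Q i) (u i * h) := by
      rw [mul_min' _ _ _ hpi.le, e4]
    rw [e1, e2, e3, mul_sub, mul_add, e5, e4]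
  set K := ∑ i, κ i with hKdef
  set Gx := ∑ i, min (P i) (κ i * h) with hGxdef
  set Gw := ∑ i, min (Q i) (u i * h) with hGwdef
  have sumx : ∑ i, pbar i * min (x i - κ i * h / pbar i) b
      = Wf n pbar x b + Gx - K * h := by
    rw [Finset.sum_congr rfl (fun i _ => idx i)]
    rw [Finset.sum_sub_distrib, Finset.sum_add_distrib, ← Finset.sum_mul]
    rfl
  have sumw : ∑ i, pbar i * min (w i - u i * h / pbar i) b
      = Wf n pbar w b + Gw - ρ * h := by
    rw [Finset.sum_congr rfl (fun i _ => idw i)]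
    rw [Finset.sum_sub_distrib, Finset.sum_add_distrib, ← Finset.sum_mul, hρs]
    rfl
  have diffP : Wf n pbar x (b+h) - Wf n pbar x b = ∑ i, P i := by
    unfold Wf
    rw [← Finset.sum_sub_distrib]
    apply Finset.sum_congr rfl
    intro i _
    have h1 := min_add_sub_min (x i) b h hh.le
    rw [← mul_sub, h1]
  have diffQ : Wf n pbar w (b+h) - Wf n pbar w b = ∑ i, Q i := by
    unfold Wf
    rw [← Finset.sum_sub_distrib]
    apply Finset.sum_congr rfl
    intro i _
    have h1 := min_add_sub_min (w i) b h hh.le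
    rw [← mul_sub, h1]
  rw [sumx, sumw]
  have lhsid : min (Wf n pbar x b - Wf n pbar w b) (Wf n pbar x (b+h) - Wf n pbar w (b+h))
      = (Wf n pbar x b - Wf n pbar w b)
        + min 0 ((∑ i, P i) - ∑ i, Q i) := by
    rw [min_eq_add_min_zero]
    congr 2
    linarith [diffP, diffQ]
  rw [lhsid]
  -- Main goal now: min 0 (∑P - ∑Q) ≤ Gx - Gw + ρ*h - K*h
  suffices hmain : min 0 ((∑ i, P i) - ∑ i, Q i) ≤ Gx - Gw + ρ * h - K * h by linarith
  classical
  set Fx := Finset.univ.filter (fun i => b + h ≤ x i) with hFx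
  set Bx := Finset.univ.filter (fun i => b < x i ∧ x i < b + h) with hBx
  set Fw := Finset.univ.filter (fun i => b + h ≤ w i) with hFw
  set Bw := Finset.univ.filter (fun i => b < w i ∧ w i < b + h) with hBw
  have tri : ∀ (v f : Fin n → ℝ), (∀ i, v i ≤ b → f i = 0) →
      ∑ i, f i = (∑ i ∈ Finset.univ.filter (fun i => b + h ≤ v i), f i)
        + ∑ i ∈ Finset.univ.filter (fun i => b < v i ∧ v i < b + h), f i := by
    intro v f hf
    rw [← Finset.sum_filter_add_sum_filter_not Finset.univ (fun i => b + h ≤ v i)]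
    congr 1
    rw [← Finset.sum_filter_add_sum_filter_not
        (Finset.univ.filter (fun i => ¬ b + h ≤ v i)) (fun i => b < v i)]
    have h1 : (Finset.univ.filter (fun i => ¬ b + h ≤ v i)).filter (fun i => b < v i)
        = Finset.univ.filter (fun i => b < v i ∧ v i < b + h) := by
      rw [Finset.filter_filter]
      apply Finset.filter_congr
      intro i _
      constructor
      · rintro ⟨h1, h2⟩; exact ⟨h2, lt_of_not_ge h1⟩
      · rintro ⟨h1, h2⟩; exact ⟨not_le.2 h2, h1⟩
    have h2 : ∑ i ∈ (Finset.univ.filter (fun i => ¬ b + h ≤ v i)).filter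
        (fun i => ¬ b < v i), f i = 0 :=
      Finset.sum_eq_zero fun i hi => hf i (not_lt.1 (Finset.mem_filter.1 hi).2)
    rw [h1, h2, add_zero]
  obtain ⟨δ, hδ0, hδh, hxv, hwv⟩ :
      ∃ δ : ℝ, 0 ≤ δ ∧ δ < h ∧ (∀ i ∈ Bx, x i = b + δ) ∧ (∀ i ∈ Bw, w i = b + δ) := by
    by_cases hBxne : Bx.Nonempty
    · obtain ⟨i₀, hi₀⟩ := hBxne
      obtain ⟨hb1, hb2⟩ := (Finset.mem_filter.1 hi₀).2
      refine ⟨x i₀ - b, by linarith, by linarith, ?_, ?_⟩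
      · intro i hi
        obtain ⟨h1, h2⟩ := (Finset.mem_filter.1 hi).2
        have := SEPx i i₀ h1 h2 hb1 hb2
        linarith
      · intro i hi
        obtain ⟨h1, h2⟩ := (Finset.mem_filter.1 hi).2
        have := SEPxw i₀ i hb1 hb2 h1 h2
        linarith
    · by_cases hBwne : Bw.Nonempty
      · obtain ⟨j₀, hj₀⟩ := hBwne
        obtain ⟨hb1, hb2⟩ := (Finset.mem_filter.1 hj₀).2
        refine ⟨w j₀ - b, by linarith, by linarith, ?_, ?_⟩
        · intro i hi; exact absurd ⟨i, hi⟩ hBxne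
        · intro i hi
          obtain ⟨h1, h2⟩ := (Finset.mem_filter.1 hi).2
          have := SEPw i j₀ h1 h2 hb1 hb2
          linarith
      · exact ⟨0, le_refl 0, hh, fun i hi => absurd ⟨i, hi⟩ hBxne,
          fun i hi => absurd ⟨i, hi⟩ hBwne⟩
  -- values of P, Q on the pieces
  have hPF : ∀ i ∈ Fx, P i = pbar i * h := by
    intro i hi
    have h1 : b + h ≤ x i := (Finset.mem_filter.1 hi).2
    have : min (max (x i - b) 0) h = h := by
      rw [max_eq_left (by linarith)]
      exact min_eq_right (by linarith)
    simp only [hPdef, this]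
  have hPB : ∀ i ∈ Bx, P i = pbar i * δ := by
    intro i hi
    have h1 := hxv i hi
    have : min (max (x i - b) 0) h = δ := by
      rw [h1]
      rw [show b + δ - b = δ by ring, max_eq_left hδ0]
      exact min_eq_left hδh.le
    simp only [hPdef, this]
  have hP0 : ∀ i, x i ≤ b → P i = 0 := by
    intro i h1
    have : min (max (x i - b) 0) h = 0 := by
      rw [max_eq_right (by linarith)]
      exact min_eq_left hh.le
    simp only [hPdef, this, mul_zero]
  have hQF : ∀ i ∈ Fw, Q i = pbar i * h := by
    intro i hi
    have h1 : b + h ≤ w i := (Finset.mem_filter.1 hi).2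
    have : min (max (w i - b) 0) h = h := by
      rw [max_eq_left (by linarith)]
      exact min_eq_right (by linarith)
    simp only [hQdef, this]
  have hQB : ∀ i ∈ Bw, Q i = pbar i * δ := by
    intro i hi
    have h1 := hwv i hi
    have : min (max (w i - b) 0) h = δ := by
      rw [h1]
      rw [show b + δ - b = δ by ring, max_eq_left hδ0]
      exact min_eq_left hδh.le
    simp only [hQdef, this]
  have hQ0 : ∀ i, w i ≤ b → Q i = 0 := by
    intro i h1
    have : min (max (w i - b) 0) h = 0 := by
      rw [max_eq_right (by linarith)]
      exact min_eq_left hh.le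
    simp only [hQdef, this, mul_zero]
  set Ax := ∑ i ∈ Fx, pbar i with hAx
  set px := ∑ i ∈ Bx, pbar i with hpx
  set Aw := ∑ i ∈ Fw, pbar i with hAw
  set pw := ∑ i ∈ Bw, pbar i with hpw
  set UF := ∑ i ∈ Fw, u i with hUF
  set UB := ∑ i ∈ Bw, u i with hUB
  set KF := ∑ i ∈ Fx, κ i with hKF
  set Kv := ∑ i ∈ Bx, κ i with hKv
  have hAx0 : 0 ≤ Ax := Finset.sum_nonneg fun i _ => (hp i).le
  have hpx0 : 0 ≤ px := Finset.sum_nonneg fun i _ => (hp i).le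
  have hpw0 : 0 ≤ pw := Finset.sum_nonneg fun i _ => (hp i).le
  have hUB0 : 0 ≤ UB := Finset.sum_nonneg fun i _ => hu0 i
  -- sum decompositions
  have SP : ∑ i, P i = Ax * h + px * δ := by
    rw [tri x P hP0]
    congr 1
    · rw [Finset.sum_congr rfl hPF, ← Finset.sum_mul]
    · rw [Finset.sum_congr rfl hPB, ← Finset.sum_mul]
  have SQ : ∑ i, Q i = Aw * h + pw * δ := by
    rw [tri w Q hQ0]
    congr 1
    · rw [Finset.sum_congr rfl hQF, ← Finset.sum_mul]
    · rw [Finset.sum_congr rfl hQB, ← Finset.sum_mul]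
  have SGx : Gx = KF * h + ∑ i ∈ Bx, min (P i) (κ i * h) := by
    rw [hGxdef, tri x (fun i => min (P i) (κ i * h))
      (fun i hxi => by
        show min (P i) (κ i * h) = 0
        rw [hP0 i hxi]
        exact min_eq_left (mul_nonneg (hκ0 i) hh.le))]
    congr 1
    have : ∀ i ∈ Fx, min (P i) (κ i * h) = κ i * h := by
      intro i hi
      rw [hPF i hi]
      exact min_eq_right (mul_le_mul_of_nonneg_right (hκle i) hh.le)
    rw [Finset.sum_congr rfl this, ← Finset.sum_mul]
  have SGw : Gw = UF * h + ∑ i ∈ Bw, min (Q i) (u i * h) := by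
    rw [hGwdef, tri w (fun i => min (Q i) (u i * h))
      (fun i hwi => by
        show min (Q i) (u i * h) = 0
        rw [hQ0 i hwi]
        exact min_eq_left (mul_nonneg (hu0 i) hh.le))]
    congr 1
    have : ∀ i ∈ Fw, min (Q i) (u i * h) = u i * h := by
      intro i hi
      rw [hQF i hi]
      exact min_eq_right (mul_le_mul_of_nonneg_right (hu1 i) hh.le)
    rw [Finset.sum_congr rfl this, ← Finset.sum_mul]
  -- waterfall facts
  have fKF : KF = min ρ Ax := by
    rw [hKF, hAx, hFx, hκdef]
    exact kappa_sum_above pbar x hp ρ hρ0 _ (b + h) (by linarith) le_rfl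
  have fKKF : KF ≤ K := by
    rw [hKF, hKdef]
    exact Finset.sum_le_sum_of_subset_of_nonneg (Finset.filter_subset _ _)
      (fun i _ _ => hκ0 i)
  have fKρ : K ≤ ρ := by
    rw [hKdef, hκdef]
    exact kappa_total_le pbar x hp ρ hρ0
  have fKv : Kv = min ρ (Ax + px) - min ρ Ax := by
    by_cases hBxne : Bx.Nonempty
    · obtain ⟨i₀, hi₀⟩ := hBxne
      have hδpos : 0 < δ := by
        have h1 := (Finset.mem_filter.1 hi₀).2.1
        have h2 := hxv i₀ hi₀
        linarith
      have hv : 0 < b + δ := by linarith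
      have hBxeq : Bx = Finset.univ.filter (fun i => x i = b + δ) := by
        ext i
        simp only [hBx, Finset.mem_filter, Finset.mem_univ, true_and]
        constructor
        · intro hi
          exact hxv i (Finset.mem_filter.2 ⟨Finset.mem_univ _, hi⟩)
        · intro hi
          constructor <;> [skip; skip] <;> rw [hi] <;> linarith
      have hHeq : Finset.univ.filter (fun j => b + δ < x j) = Fx := by
        ext j
        simp only [hFx, Finset.mem_filter, Finset.mem_univ, true_and]
        constructor
        · intro hj
          by_contra hc
          push_neg at hc
          have hjB : j ∈ Bx := by
            rw [hBx]
            exact Finset.mem_filter.2 ⟨Finset.mem_univ _, ⟨by linarith, hc⟩⟩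
          have := hxv j hjB
          rw [this] at hj
          exact lt_irrefl _ hj
        · intro hj; linarith
      have hne' : (Finset.univ.filter (fun i => x i = b + δ)).Nonempty := by
        rw [← hBxeq]; exact ⟨i₀, hi₀⟩
      rw [hKv, hBxeq, hκdef, kappa_group pbar x hp ρ (b + δ) hv hne', hHeq, ← hBxeq]
    · have hBxe := Finset.not_nonempty_iff_eq_empty.1 hBxne
      have e1 : Kv = 0 := by rw [hKv, hBxe]; exact Finset.sum_empty
      have e2 : px = 0 := by rw [hpx, hBxe]; exact Finset.sum_empty
      rw [e1, e2, add_zero]; ring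
  have fGxB : (∑ i ∈ Bx, min (P i) (κ i * h)) = min (px * δ) (Kv * h) := by
    by_cases hBxne : Bx.Nonempty
    · obtain ⟨i₀, hi₀⟩ := hBxne
      have hδpos : 0 < δ := by
        have h1 := (Finset.mem_filter.1 hi₀).2.1
        have h2 := hxv i₀ hi₀
        linarith
      have hBxeq : Bx = Finset.univ.filter (fun i => x i = b + δ) := by
        ext i
        simp only [hBx, Finset.mem_filter, Finset.mem_univ, true_and]
        constructor
        · intro hi
          exact hxv i (Finset.mem_filter.2 ⟨Finset.mem_univ _, hi⟩)
        · intro hi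
          constructor <;> [skip; skip] <;> rw [hi] <;> linarith
      have hHeq : Finset.univ.filter (fun j => b + δ < x j) = Fx := by
        ext j
        simp only [hFx, Finset.mem_filter, Finset.mem_univ, true_and]
        constructor
        · intro hj
          by_contra hc
          push_neg at hc
          have hjB : j ∈ Bx := by
            rw [hBx]
            exact Finset.mem_filter.2 ⟨Finset.mem_univ _, ⟨by linarith, hc⟩⟩
          have := hxv j hjB
          rw [this] at hj
          exact lt_irrefl _ hj
        · intro hj; linarith
      set t := max 0 (min 1 ((ρ - Ax) / px)) with ht
      have hκBx : ∀ i ∈ Bx, κ i = pbar i * t := by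
        intro i hi
        have hxi : x i = b + δ := hxv i hi
        show kappa n pbar x ρ i = pbar i * t
        unfold kappa
        rw [if_pos (by rw [hxi]; linarith)]
        have e1 : Finset.univ.filter (fun j => x i < x j) = Fx := by
          rw [← hHeq]
          apply Finset.filter_congr
          intro j _
          rw [hxi]
        have e2 : Finset.univ.filter (fun j => x j = x i) = Bx := by
          rw [hBxeq]
          apply Finset.filter_congr
          intro j _
          rw [hxi]
        rw [e1, e2, ← hAx, ← hpx, ht]
      have step1 : ∑ i ∈ Bx, min (P i) (κ i * h)
          = ∑ i ∈ Bx, pbar i * min δ (t * h) := by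
        apply Finset.sum_congr rfl
        intro i hi
        rw [hPB i hi, hκBx i hi, mul_assoc, mul_min' _ _ _ (hp i).le]
      have step2 : Kv = px * t := by
        rw [hKv, Finset.sum_congr rfl hκBx, ← Finset.sum_mul, ← hpx]
      rw [step1, ← Finset.sum_mul, ← hpx, mul_min' _ _ _ hpx0, step2]
      congr 1
      ring
    · have hBxe := Finset.not_nonempty_iff_eq_empty.1 hBxne
      have e1 : Kv = 0 := by rw [hKv, hBxe]; exact Finset.sum_empty
      have e2 : px = 0 := by rw [hpx, hBxe]; exact Finset.sum_empty
      rw [hBxe, e1, e2, Finset.sum_empty, zero_mul, zero_mul]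
      simp
  have fGwB1 : (∑ i ∈ Bw, min (Q i) (u i * h)) ≤ pw * δ := by
    calc (∑ i ∈ Bw, min (Q i) (u i * h)) ≤ ∑ i ∈ Bw, pbar i * δ :=
          Finset.sum_le_sum fun i hi => le_trans (min_le_left _ _) (le_of_eq (hQB i hi))
    _ = pw * δ := by rw [← Finset.sum_mul, ← hpw]
  have fGwB2 : (∑ i ∈ Bw, min (Q i) (u i * h)) ≤ UB * h := by
    calc (∑ i ∈ Bw, min (Q i) (u i * h)) ≤ ∑ i ∈ Bw, u i * h :=
          Finset.sum_le_sum fun i _ => min_le_right _ _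
    _ = UB * h := by rw [← Finset.sum_mul, ← hUB]
  have fUF : UF ≤ Aw := Finset.sum_le_sum fun i _ => hu1 i
  have fUFB : UF + UB ≤ ρ := by
    have hdisj : Disjoint Fw Bw := by
      rw [Finset.disjoint_left]
      intro i hiF hiB
      exact absurd (Finset.mem_filter.1 hiB).2.2 (not_lt.2 (Finset.mem_filter.1 hiF).2)
    calc UF + UB = ∑ i ∈ Fw ∪ Bw, u i := (Finset.sum_union hdisj).symm
    _ ≤ ∑ i, u i := Finset.sum_le_sum_of_subset_of_nonneg (Finset.subset_univ _)
        (fun i _ _ => hu0 i)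
    _ = ρ := hρs
  have hUFh : UF * h ≤ Aw * h := mul_le_mul_of_nonneg_right fUF hh.le
  have hKhρ : K * h ≤ ρ * h := mul_le_mul_of_nonneg_right fKρ hh.le
  have hUFUB : UF * h + UB * h ≤ ρ * h := by nlinarith [fUFB, hh.le]
  rw [SP, SQ, SGx, SGw, fGxB]
  rcases le_total ρ Ax with hc | hc
  · have eKF : KF = ρ := by rw [fKF]; exact min_eq_left hc
    have eKv : Kv = 0 := by rw [fKv, min_eq_left (by linarith), min_eq_left hc]; ring
    have eG : min (px * δ) (Kv * h) = 0 := by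
      rw [eKv, zero_mul]
      exact min_eq_right (mul_nonneg hpx0 hδ0)
    rw [eKF, eG]
    refine le_trans (min_le_left _ _) ?_
    linarith [fGwB2]
  · have eKF : KF = Ax := by rw [fKF]; exact min_eq_right hc
    rcases le_total (px * δ) (Kv * h) with hd | hd
    · rw [eKF, min_eq_left hd]
      refine le_trans (min_le_right _ _) ?_
      linarith [fGwB1]
    · rcases le_total ρ (Ax + px) with he | he
      · have eKv : Kv = ρ - Ax := by rw [fKv, min_eq_left he, min_eq_right hc]
        rw [eKF, min_eq_right hd, eKv]
        refine le_trans (min_le_left _ _) ?_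
        have hring : Ax * h + (ρ - Ax) * h = ρ * h := by ring
        linarith [fGwB2]
      · have eKv : Kv = px := by
          rw [fKv, min_eq_right (by linarith), min_eq_right hc]; ring
        have hpxz : px = 0 := by
          by_contra hpos
          have hpos' : 0 < px := lt_of_le_of_ne hpx0 (Ne.symm hpos)
          have h1 : px * δ < px * h := mul_lt_mul_of_pos_left hδh hpos'
          rw [eKv] at hd
          linarith
        have e0 : Kv * h = 0 := by rw [eKv, hpxz]; ring
        rw [eKF, min_eq_right hd, e0, hpxz]
        refine le_trans (min_le_right _ _) ?_
        linarith [fGwB1]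

/-- single cell indicator -/
noncomputable def cell (a bb : Fin n) : Fin n → Fin n → ℝ :=
  fun i j => if i = a ∧ j = bb then 1 else 0

lemma cell_nonneg (a bb i j : Fin n) : 0 ≤ cell a bb i j := by
  unfold cell; split_ifs <;> norm_num

lemma cell_row (a bb i : Fin n) : ∑ j, cell a bb i j = if i = a then 1 else 0 := by
  unfold cell
  by_cases h : i = a
  · simp [h]
  · simp [h]

lemma cell_col (a bb j : Fin n) : ∑ i, cell a bb i j = if j = bb then 1 else 0 := by
  unfold cell
  by_cases h : j = bb
  · simp [h]
  · simp [h]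

lemma cell_E (x : Fin n → ℝ) (a bb j : Fin n) :
    ∑ i, cell a bb i j * x i = if j = bb then x a else 0 := by
  unfold cell
  by_cases h : j = bb
  · subst h
    simp only [and_true]
    rw [Finset.sum_congr rfl (fun i _ => by rw [ite_mul, one_mul, zero_mul])]
    simp
  · simp [h]

theorem matrix_exists (pbar x y : Fin n → ℝ) (hp : ∀ i, 0 < pbar i) (hx : ∀ i, 0 ≤ x i)
    (maj : ∀ a : ℝ, 0 ≤ a → ∑ i, pbar i * min (x i) a ≤ ∑ i, pbar i * min (y i) a) :
    ∃ N : Fin n → Fin n → ℝ, (∀ i j, 0 ≤ N i j) ∧ (∀ i, ∑ j, N i j = pbar i) ∧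
      (∀ j, ∑ i, N i j = pbar j) ∧ (∀ j, ∑ i, N i j * x i ≤ pbar j * y j) := by
  classical
  rcases isEmpty_or_nonempty (Fin n) with hE | hNE
  · exact ⟨0, fun i => isEmptyElim i, fun i => isEmptyElim i, fun j => isEmptyElim j,
      fun j => isEmptyElim j⟩
  set Ptot := ∑ i, pbar i with hPtot
  have hPtot0 : 0 < Ptot := Finset.sum_pos (fun i _ => hp i) Finset.univ_nonempty
  set S : Set (Fin n → Fin n → ℝ) :=
    {N | (∀ i j, 0 ≤ N i j) ∧ (∀ i, ∑ j, N i j = pbar i) ∧ (∀ j, ∑ i, N i j = pbar j)}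
    with hSdef
  have hSne : S.Nonempty := by
    refine ⟨fun i j => pbar i * pbar j / Ptot, ⟨?_, ?_, ?_⟩⟩
    · intro i j
      exact div_nonneg (mul_nonneg (hp i).le (hp j).le) hPtot0.le
    · intro i
      rw [← Finset.sum_div, ← Finset.mul_sum, ← hPtot]
      field_simp
    · intro j
      rw [← Finset.sum_div, ← Finset.sum_mul, ← hPtot]
      field_simp
  have hScomp : IsCompact S := by
    have hbox : IsCompact (Set.pi Set.univ
        (fun _ : Fin n => Set.pi Set.univ (fun j : Fin n => Set.Icc (0:ℝ) (pbar j)))) :=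
      isCompact_univ_pi fun _ => isCompact_univ_pi fun j => isCompact_Icc
    have hsub : S ⊆ Set.pi Set.univ
        (fun _ : Fin n => Set.pi Set.univ (fun j : Fin n => Set.Icc (0:ℝ) (pbar j))) := by
      rintro N ⟨hN0, _, hNcol⟩ i _
      intro j _
      refine ⟨hN0 i j, ?_⟩
      calc N i j ≤ ∑ i', N i' j :=
            Finset.single_le_sum (fun k _ => hN0 k j) (Finset.mem_univ i)
      _ = pbar j := hNcol j
    have hev : ∀ i j : Fin n, Continuous fun N : Fin n → Fin n → ℝ => N i j :=
      fun i j => (continuous_apply j).comp (continuous_apply i)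
    have hclosed : IsClosed S := by
      have h1 : IsClosed {N : Fin n → Fin n → ℝ | ∀ i j, 0 ≤ N i j} := by
        have : {N : Fin n → Fin n → ℝ | ∀ i j, 0 ≤ N i j}
            = ⋂ i, ⋂ j, {N : Fin n → Fin n → ℝ | 0 ≤ N i j} := by
          ext N; simp [Set.mem_iInter]
        rw [this]
        exact isClosed_iInter fun i => isClosed_iInter fun j =>
          isClosed_le continuous_const (hev i j)
      have h2 : IsClosed {N : Fin n → Fin n → ℝ | ∀ i, ∑ j, N i j = pbar i} := by
        have : {N : Fin n → Fin n → ℝ | ∀ i, ∑ j, N i j = pbar i}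
            = ⋂ i, {N : Fin n → Fin n → ℝ | ∑ j, N i j = pbar i} := by
          ext N; simp [Set.mem_iInter]
        rw [this]
        exact isClosed_iInter fun i =>
          isClosed_eq (continuous_finset_sum _ fun j _ => hev i j) continuous_const
      have h3 : IsClosed {N : Fin n → Fin n → ℝ | ∀ j, ∑ i, N i j = pbar j} := by
        have : {N : Fin n → Fin n → ℝ | ∀ j, ∑ i, N i j = pbar j}
            = ⋂ j, {N : Fin n → Fin n → ℝ | ∑ i, N i j = pbar j} := by
          ext N; simp [Set.mem_iInter]
        rw [this]
        exact isClosed_iInter fun j =>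
          isClosed_eq (continuous_finset_sum _ fun i _ => hev i j) continuous_const
      have : S = {N : Fin n → Fin n → ℝ | ∀ i j, 0 ≤ N i j}
          ∩ ({N | ∀ i, ∑ j, N i j = pbar i} ∩ {N | ∀ j, ∑ i, N i j = pbar j}) := by
        ext N; simp only [hSdef, Set.mem_setOf_eq, Set.mem_inter_iff]
      rw [this]
      exact h1.inter (h2.inter h3)
    exact hbox.of_isClosed_subset hclosed hsub
  set Θ : (Fin n → Fin n → ℝ) → ℝ :=
    fun N => ∑ j, (max ((∑ i, N i j * x i) - pbar j * y j) 0)^2 / pbar j with hΘdef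
  have hΘc : Continuous Θ := by
    apply continuous_finset_sum
    intro j _
    have hEj : Continuous (fun N : Fin n → Fin n → ℝ => ∑ i, N i j * x i) :=
      continuous_finset_sum _ fun i _ =>
        ((show Continuous (fun N : Fin n → Fin n → ℝ => N i j) from
          (continuous_apply j).comp (continuous_apply i)).mul continuous_const)
    exact (((hEj.sub continuous_const).max continuous_const).pow 2).div_const _
  obtain ⟨N, hNS, hNmin⟩ := hScomp.exists_isMinOn hSne hΘc.continuousOn
  obtain ⟨hN0, hrow, hcol⟩ := hNS
  refine ⟨N, hN0, hrow, hcol, ?_⟩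
  by_contra hviol
  push_neg at hviol
  obtain ⟨A₀, hA₀⟩ := hviol
  set E : Fin n → ℝ := fun j => ∑ i, N i j * x i with hEdef
  set V : Finset (Fin n) := Finset.univ.filter (fun j => pbar j * y j < E j) with hVdef
  have hA₀V : A₀ ∈ V := Finset.mem_filter.2 ⟨Finset.mem_univ _, hA₀⟩
  have hcolpos : ∀ j : Fin n, ∃ i, 0 < N i j := by
    intro j
    by_contra hno
    push_neg at hno
    have : ∑ i, N i j = 0 :=
      Finset.sum_eq_zero fun i _ => le_antisymm (hno i) (hN0 i j)
    rw [hcol j] at this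
    exact absurd this (ne_of_gt (hp j))
  set Spt : Finset (Fin n × Fin n) :=
    (Finset.univ ×ˢ Finset.univ).filter (fun p => p.2 ∈ V ∧ 0 < N p.1 p.2) with hSptdef
  have hSptne : Spt.Nonempty := by
    obtain ⟨i₀, hi₀⟩ := hcolpos A₀
    exact ⟨(i₀, A₀), Finset.mem_filter.2 ⟨Finset.mem_product.2
      ⟨Finset.mem_univ _, Finset.mem_univ _⟩, hA₀V, hi₀⟩⟩
  obtain ⟨pstar, hpmem, hpmax⟩ := Finset.exists_max_image Spt (fun p => x p.1) hSptne
  obtain ⟨istar, Astar⟩ := pstar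
  simp only at hpmax
  have hmem' := Finset.mem_filter.1 hpmem
  have hAstarV : Astar ∈ V := hmem'.2.1
  have hNiA : 0 < N istar Astar := hmem'.2.2
  set lam := x istar with hlam
  -- KEY structural fact from optimality
  have key : ∀ B k, B ∉ V → 0 < N k B → lam ≤ x k := by
    intro B k hBV hNkB
    by_contra hlt
    push_neg at hlt
    have hABne : Astar ≠ B := fun h => hBV (h ▸ hAstarV)
    have hikne : istar ≠ k := by
      intro h; rw [← h] at hlt; exact lt_irrefl _ hlt
    set d := lam - x k with hd
    have hd0 : 0 < d := by rw [hd]; linarith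
    set pA := pbar Astar with hpA
    set pB := pbar B with hpB
    set mA := pbar Astar * y Astar with hmA
    set vA := E Astar - mA with hvA
    clear_value d pA pB mA vA
    have hpA0 : 0 < pA := by rw [hpA]; exact hp Astar
    have hpB0 : 0 < pB := by rw [hpB]; exact hp B
    have hvA0 : 0 < vA := by
      have h2 := (Finset.mem_filter.1 hAstarV).2
      rw [hvA, hmA]; linarith
    have hEB : E B ≤ pbar B * y B := by
      by_contra hc; push_neg at hc
      exact hBV (Finset.mem_filter.2 ⟨Finset.mem_univ _, hc⟩)
    set δ := min (min (N istar Astar) (N k B)) (vA * pB / (d * (pA + pB))) with hδ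
    have hpApB : 0 < pA + pB := by linarith
    have hδ0 : 0 < δ := by
      apply lt_min (lt_min hNiA hNkB)
      apply div_pos (mul_pos hvA0 hpB0) (mul_pos hd0 hpApB)
    have hδ1 : δ ≤ N istar Astar := le_trans (min_le_left _ _) (min_le_left _ _)
    have hδ2 : δ ≤ N k B := le_trans (min_le_left _ _) (min_le_right _ _)
    have hδ3 : δ * d ≤ vA * pB / (pA + pB) := by
      have h1 : δ ≤ vA * pB / (d * (pA + pB)) := min_le_right _ _
      calc δ * d ≤ (vA * pB / (d * (pA + pB))) * d := mul_le_mul_of_nonneg_right h1 hd0.le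
      _ = vA * pB / (pA + pB) := by field_simp
    have hδd_le_vA : δ * d ≤ vA := by
      have h2 : vA * pB / (pA + pB) ≤ vA := by
        rw [div_le_iff₀ hpApB]
        nlinarith [mul_nonneg hvA0.le hpA0.le]
      linarith
    set D : Fin n → Fin n → ℝ := fun i j =>
      cell istar B i j + cell k Astar i j - cell istar Astar i j - cell k B i j with hDdef
    set N' : Fin n → Fin n → ℝ := fun i j => N i j + δ * D i j with hN'def
    have hN'S : N' ∈ S := by
      refine ⟨?_, ?_, ?_⟩
      · intro i j
        show 0 ≤ N i j + δ * D i j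
        by_cases hA : i = istar ∧ j = Astar
        · obtain ⟨h1, h2⟩ := hA
          rw [h1, h2]
          have hDval : D istar Astar = -1 := by
            simp [hDdef, cell, hABne, hikne]
          rw [hDval]; linarith
        · by_cases hB : i = k ∧ j = B
          · obtain ⟨h1, h2⟩ := hB
            rw [h1, h2]
            have hDval : D k B = -1 := by
              simp [hDdef, cell, Ne.symm hikne, Ne.symm hABne]
            rw [hDval]; linarith
          · have hc1 : cell istar Astar i j = 0 := by unfold cell; rw [if_neg hA]
            have hc2 : cell k B i j = 0 := by unfold cell; rw [if_neg hB]
            have hDval : 0 ≤ D i j := by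
              have e : D i j = cell istar B i j + cell k Astar i j
                  - cell istar Astar i j - cell k B i j := rfl
              rw [e, hc1, hc2]
              have g1 := cell_nonneg istar B i j
              have g2 := cell_nonneg k Astar i j
              linarith
            have := mul_nonneg hδ0.le hDval
            linarith [hN0 i j]
      · intro i
        show ∑ j, (N i j + δ * D i j) = pbar i
        rw [Finset.sum_add_distrib, hrow i, ← Finset.mul_sum]
        have hz : ∑ j, D i j = 0 := by
          have e : ∀ j, D i j = cell istar B i j + cell k Astar i j
              - cell istar Astar i j - cell k B i j := fun j => rfl
          rw [Finset.sum_congr rfl (fun j _ => e j), Finset.sum_sub_distrib,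
            Finset.sum_sub_distrib, Finset.sum_add_distrib,
            cell_row, cell_row, cell_row, cell_row]
          ring
        rw [hz, mul_zero, add_zero]
      · intro j
        show ∑ i, (N i j + δ * D i j) = pbar j
        rw [Finset.sum_add_distrib, hcol j, ← Finset.mul_sum]
        have hz : ∑ i, D i j = 0 := by
          have e : ∀ i, D i j = cell istar B i j + cell k Astar i j
              - cell istar Astar i j - cell k B i j := fun i => rfl
          rw [Finset.sum_congr rfl (fun i _ => e i), Finset.sum_sub_distrib,
            Finset.sum_sub_distrib, Finset.sum_add_distrib,
            cell_col, cell_col, cell_col, cell_col]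
          ring
        rw [hz, mul_zero, add_zero]
    have hE' : ∀ j, (∑ i, N' i j * x i)
        = E j + δ * ((if j = B then x istar else 0) + (if j = Astar then x k else 0)
          - (if j = Astar then x istar else 0) - (if j = B then x k else 0)) := by
      intro j
      show ∑ i, (N i j + δ * D i j) * x i = _
      have e : ∀ i, (N i j + δ * D i j) * x i = N i j * x i + δ * (D i j * x i) :=
        fun i => by ring
      rw [Finset.sum_congr rfl (fun i _ => e i), Finset.sum_add_distrib, ← Finset.mul_sum]
      have e2 : ∀ i, D i j * x i = cell istar B i j * x i + cell k Astar i j * x i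
          - cell istar Astar i j * x i - cell k B i j * x i := fun i => by
        have : D i j = cell istar B i j + cell k Astar i j
            - cell istar Astar i j - cell k B i j := rfl
        rw [this]; ring
      rw [Finset.sum_congr rfl (fun i _ => e2 i), Finset.sum_sub_distrib,
        Finset.sum_sub_distrib, Finset.sum_add_distrib,
        cell_E, cell_E, cell_E, cell_E]
    have hEA' : (∑ i, N' i Astar * x i) = E Astar - δ * d := by
      rw [hE' Astar, if_neg hABne, if_pos rfl, if_pos rfl, if_neg hABne, hd, hlam]
      ring
    have hEB' : (∑ i, N' i B * x i) = E B + δ * d := by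
      rw [hE' B, if_pos rfl, if_neg (Ne.symm hABne), if_neg (Ne.symm hABne), if_pos rfl,
        hd, hlam]
      ring
    have hdiff : Θ N' - Θ N
        = ((max ((E Astar - δ*d) - mA) 0)^2/pA - (max (E Astar - mA) 0)^2/pA)
          + ((max ((E B + δ*d) - pbar B * y B) 0)^2/pB
            - (max (E B - pbar B * y B) 0)^2/pB) := by
      have hΘsub : Θ N' - Θ N = ∑ j,
          ((max ((∑ i, N' i j * x i) - pbar j * y j) 0)^2 / pbar j
            - (max ((∑ i, N i j * x i) - pbar j * y j) 0)^2 / pbar j) := by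
        rw [Finset.sum_sub_distrib]
      rw [hΘsub]
      have hvan : ∀ j, j ≠ Astar → j ≠ B →
          (max ((∑ i, N' i j * x i) - pbar j * y j) 0)^2 / pbar j
            - (max ((∑ i, N i j * x i) - pbar j * y j) 0)^2 / pbar j = 0 := by
        intro j hjA hjB
        have : (∑ i, N' i j * x i) = E j := by
          rw [hE' j]
          simp [hjA, hjB]
        rw [this]
        simp [hEdef]
      rw [← Finset.sum_erase_add _ _ (Finset.mem_univ Astar)]
      rw [Finset.sum_eq_single_of_mem B
        (Finset.mem_erase.2 ⟨Ne.symm hABne, Finset.mem_univ _⟩)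
        (fun j hj hjB => hvan j (Finset.mem_erase.1 hj).1 hjB)]
      rw [hEA', hEB']
      have eE : ∀ j : Fin n, (∑ i, N i j * x i) = E j := fun j => rfl
      rw [eE, eE]
      rw [hpA, hpB, hmA]
      ring
    have hfA : (max ((E Astar - δ*d) - mA) 0)^2/pA - (max (E Astar - mA) 0)^2/pA
        = ((vA - δ*d)^2 - vA^2)/pA := by
      have e1 : max ((E Astar - δ*d) - mA) 0 = vA - δ*d := by
        have : E Astar - δ*d - mA = vA - δ*d := by rw [hvA]; ring
        rw [this]
        exact max_eq_left (by linarith [hδd_le_vA])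
      have e2 : max (E Astar - mA) 0 = vA := by
        rw [← hvA]
        exact max_eq_left hvA0.le
      rw [e1, e2, div_sub_div_same]
    have hfB : (max ((E B + δ*d) - pbar B * y B) 0)^2/pB
        - (max (E B - pbar B * y B) 0)^2/pB ≤ (δ*d)^2/pB := by
      have e1 : max ((E B + δ*d) - pbar B * y B) 0 ≤ δ*d := by
        apply max_le
        · linarith
        · exact mul_nonneg hδ0.le hd0.le
      have e2 : (max ((E B + δ*d) - pbar B * y B) 0)^2 ≤ (δ*d)^2 :=
        pow_le_pow_left₀ (le_max_right _ _) e1 2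
      have e3 : 0 ≤ (max (E B - pbar B * y B) 0)^2 := sq_nonneg _
      have e4 : (max ((E B + δ*d) - pbar B * y B) 0)^2/pB ≤ (δ*d)^2/pB :=
        (div_le_div_iff_of_pos_right hpB0).2 e2
      have e5 : 0 ≤ (max (E B - pbar B * y B) 0)^2/pB :=
        div_nonneg e3 hpB0.le
      linarith
    have hneg : ((vA - δ*d)^2 - vA^2)/pA + (δ*d)^2/pB < 0 := by
      set s := δ * d with hs
      have hs0 : 0 < s := mul_pos hδ0 hd0
      have hs3 : s * (pA + pB) ≤ vA * pB := by
        rw [hs]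
        calc δ * d * (pA + pB) ≤ (vA * pB / (pA + pB)) * (pA + pB) :=
              mul_le_mul_of_nonneg_right hδ3 hpApB.le
        _ = vA * pB := by field_simp
      rw [div_add_div _ _ (ne_of_gt hpA0) (ne_of_gt hpB0)]
      apply div_neg_of_neg_of_pos
      · have hkey1 : s * (s * (pA + pB)) ≤ s * (vA * pB) :=
          mul_le_mul_of_nonneg_left hs3 hs0.le
        have hkey2 : 0 < s * (vA * pB) := mul_pos hs0 (mul_pos hvA0 hpB0)
        nlinarith [hkey1, hkey2]
      · exact mul_pos hpA0 hpB0
    have hlt2 : Θ N' < Θ N := by linarith [hdiff, hfA, hfB, hneg]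
    have := (isMinOn_iff.1 hNmin) N' hN'S
    linarith
  -- Counting: contradiction with maj at level lam
  have hlam0 : 0 ≤ lam := hx istar
  have main : ∑ j, pbar j * min (y j) lam < ∑ i, pbar i * min (x i) lam := by
    have swap : ∑ i, pbar i * min (x i) lam = ∑ j, ∑ i, N i j * min (x i) lam := by
      rw [Finset.sum_comm]
      apply Finset.sum_congr rfl
      intro i _
      rw [← Finset.sum_mul, hrow i]
    rw [swap]
    apply Finset.sum_lt_sum
    · intro j _
      by_cases hjV : j ∈ V
      · have e1 : ∑ i, N i j * min (x i) lam = E j := by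
          apply Finset.sum_congr rfl
          intro i _
          by_cases hNij : 0 < N i j
          · have : x i ≤ lam := hpmax (i, j) (Finset.mem_filter.2
              ⟨Finset.mem_product.2 ⟨Finset.mem_univ _, Finset.mem_univ _⟩, hjV, hNij⟩)
            rw [min_eq_left this]
          · have : N i j = 0 := le_antisymm (not_lt.1 hNij) (hN0 i j)
            rw [this, zero_mul, zero_mul]
        rw [e1]
        have h2 : pbar j * y j < E j := (Finset.mem_filter.1 hjV).2
        calc pbar j * min (y j) lam ≤ pbar j * y j :=
              mul_le_mul_of_nonneg_left (min_le_left _ _) (hp j).le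
        _ ≤ E j := h2.le
      · have e1 : ∀ i, N i j * lam ≤ N i j * min (x i) lam := by
          intro i
          by_cases hNij : 0 < N i j
          · exact mul_le_mul_of_nonneg_left (le_min (key j i hjV hNij) le_rfl) (hN0 i j)
          · have : N i j = 0 := le_antisymm (not_lt.1 hNij) (hN0 i j)
            rw [this, zero_mul, zero_mul]
        calc pbar j * min (y j) lam ≤ pbar j * lam :=
              mul_le_mul_of_nonneg_left (min_le_right _ _) (hp j).le
        _ = ∑ i, N i j * lam := by rw [← Finset.sum_mul, hcol j]
        _ ≤ ∑ i, N i j * min (x i) lam := Finset.sum_le_sum fun i _ => e1 i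
    · refine ⟨Astar, Finset.mem_univ _, ?_⟩
      have e1 : ∑ i, N i Astar * min (x i) lam = E Astar := by
        apply Finset.sum_congr rfl
        intro i _
        by_cases hNij : 0 < N i Astar
        · have : x i ≤ lam := hpmax (i, Astar) (Finset.mem_filter.2
            ⟨Finset.mem_product.2 ⟨Finset.mem_univ _, Finset.mem_univ _⟩, hAstarV, hNij⟩)
          rw [min_eq_left this]
        · have : N i Astar = 0 := le_antisymm (not_lt.1 hNij) (hN0 i Astar)
          rw [this, zero_mul, zero_mul]
      rw [e1]
      have h2 : pbar Astar * y Astar < E Astar := (Finset.mem_filter.1 hAstarV).2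
      calc pbar Astar * min (y Astar) lam ≤ pbar Astar * y Astar :=
            mul_le_mul_of_nonneg_left (min_le_left _ _) (hp Astar).le
      _ < E Astar := h2
  exact absurd (maj lam hlam0) (not_le.2 main)

theorem feasible_transfer (pbar x y : Fin n → ℝ) (hp : ∀ i, 0 < pbar i)
    (N : Fin n → Fin n → ℝ) (hN0 : ∀ i j, 0 ≤ N i j) (hrow : ∀ i, ∑ j, N i j = pbar i)
    (hcol : ∀ j, ∑ i, N i j = pbar j) (hEn : ∀ j, ∑ i, N i j * x i ≤ pbar j * y j)
    (R : ℝ → ℝ) (hfx : Feasible n pbar x R) : Feasible n pbar y R := by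
  obtain ⟨u, z, hz0, hbox, hsum, hderiv, hnn⟩ := hfx
  refine ⟨fun t j => ∑ i, N i j * (u t i / pbar i),
    fun t j => y j - ∑ i, (N i j / pbar j) * (x i - z t i), ?_, ?_, ?_, ?_, ?_⟩
  · intro j
    show y j - ∑ i, (N i j / pbar j) * (x i - z 0 i) = y j
    have hzz : ∀ i, (N i j / pbar j) * (x i - z 0 i) = 0 := fun i => by rw [hz0 i]; ring
    rw [Finset.sum_congr rfl (fun i _ => hzz i), Finset.sum_const_zero, sub_zero]
  · intro t ht j
    show (∑ i, N i j * (u t i / pbar i)) ∈ Set.Icc 0 (pbar j)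
    constructor
    · apply Finset.sum_nonneg
      intro i _
      exact mul_nonneg (hN0 i j) (div_nonneg (hbox t ht i).1 (hp i).le)
    · calc ∑ i, N i j * (u t i / pbar i) ≤ ∑ i, N i j * 1 := by
            apply Finset.sum_le_sum
            intro i _
            apply mul_le_mul_of_nonneg_left _ (hN0 i j)
            rw [div_le_one (hp i)]
            exact (hbox t ht i).2
      _ = pbar j := by
            rw [Finset.sum_congr rfl (fun i _ => mul_one (N i j))]
            exact hcol j
  · intro t ht
    show ∑ j, ∑ i, N i j * (u t i / pbar i) = R t
    rw [Finset.sum_comm]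
    calc ∑ i, ∑ j, N i j * (u t i / pbar i)
        = ∑ i, (u t i / pbar i) * ∑ j, N i j := by
          apply Finset.sum_congr rfl
          intro i _
          rw [Finset.mul_sum]
          exact Finset.sum_congr rfl fun j _ => by ring
    _ = ∑ i, u t i := by
          apply Finset.sum_congr rfl
          intro i _
          rw [hrow i]
          exact div_mul_cancel₀ _ (ne_of_gt (hp i))
    _ = R t := hsum t ht
  · intro t ht j
    show HasDerivAt (fun s => y j - ∑ i, (N i j / pbar j) * (x i - z s i))
      (-(∑ i, N i j * (u t i / pbar i)) / pbar j) t
    have hD : ∀ i, HasDerivAt (fun s => (N i j / pbar j) * (x i - z s i))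
        ((N i j / pbar j) * (u t i / pbar i)) t := by
      intro i
      have h1 : HasDerivAt (fun s => z s i) (-(u t i) / pbar i) t := hderiv t ht i
      have h2 : HasDerivAt (fun s => x i - z s i) (u t i / pbar i) t := by
        have h3 := h1.const_sub (x i)
        exact h3.congr_deriv (by ring)
      exact h2.const_mul _
    have hsumD : HasDerivAt (fun s => ∑ i, (N i j / pbar j) * (x i - z s i))
        (∑ i, (N i j / pbar j) * (u t i / pbar i)) t := HasDerivAt.fun_sum (fun i _ => hD i)
    have h4 := hsumD.const_sub (y j)
    refine h4.congr_deriv ?_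
    rw [neg_div, neg_inj, Finset.sum_div]
    exact Finset.sum_congr rfl fun i _ => by ring
  · intro t ht j
    show 0 ≤ y j - ∑ i, (N i j / pbar j) * (x i - z t i)
    have h1 : ∑ i, (N i j / pbar j) * (x i - z t i) ≤ y j := by
      have h2 : ∀ i, (N i j / pbar j) * (x i - z t i) ≤ (N i j * x i) / pbar j := by
        intro i
        have h3 := hnn t ht i
        have hfrac : 0 ≤ N i j / pbar j := div_nonneg (hN0 i j) (hp j).le
        calc (N i j / pbar j) * (x i - z t i) ≤ (N i j / pbar j) * x i :=
              mul_le_mul_of_nonneg_left (by linarith) hfrac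
        _ = (N i j * x i) / pbar j := by ring
      calc ∑ i, (N i j / pbar j) * (x i - z t i) ≤ ∑ i, (N i j * x i) / pbar j :=
            Finset.sum_le_sum fun i _ => h2 i
      _ = (∑ i, N i j * x i) / pbar j := by rw [Finset.sum_div]
      _ ≤ (pbar j * y j) / pbar j := (div_le_div_iff_of_pos_right (hp j)).2 (hEn j)
      _ = y j := by rw [mul_comm]; exact mul_div_cancel_right₀ _ (ne_of_gt (hp j))
    linarith
lemma abs_max_sub_max (a b c : ℝ) : |max a c - max b c| ≤ |a - b| := by
  have h1 : a - b ≤ |a - b| := le_abs_self _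
  have h2 : -(|a - b|) ≤ a - b := neg_abs_le _
  have ha := abs_nonneg (a - b)
  rw [abs_le]
  rcases le_total a c with h | h
  · rcases le_total b c with h' | h'
    · rw [max_eq_right h, max_eq_right h']
      constructor <;> linarith
    · rw [max_eq_right h, max_eq_left h']
      constructor <;> linarith
  · rcases le_total b c with h' | h'
    · rw [max_eq_left h, max_eq_right h']
      constructor <;> linarith
    · rw [max_eq_left h, max_eq_left h']
      constructor <;> linarith

theorem majorize (pbar : Fin n → ℝ) (hp : ∀ i, 0 < pbar i) (Pr : ℝ → ℝ)
    (T : ℝ) (hT : 0 ≤ T) (zt zs u : ℝ → Fin n → ℝ)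
    (hubox : ∀ s ∈ Set.Icc 0 T, ∀ i, u s i ∈ Set.Icc 0 (pbar i))
    (husum : ∀ s ∈ Set.Icc 0 T, ∑ i, u s i = Pr s)
    (hztnn : ∀ s ∈ Set.Icc 0 T, ∀ i, 0 ≤ zt s i)
    (hztd : ∀ s ∈ Set.Icc 0 T, ∀ i, HasDerivAt (fun r => zt r i) (-(u s i) / pbar i) s)
    (hzsd : ∀ s ∈ Set.Icc 0 T, ∀ i,
      HasDerivAt (fun r => zs r i) (-(kappa n pbar (zs s) (Pr s) i) / pbar i) s)
    (h0 : zs 0 = zt 0) :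
    ∀ b : ℝ, 0 ≤ b → ∑ i, pbar i * min (zt T i) b ≤ ∑ i, pbar i * min (zs T i) b := by
  have h0T : (0:ℝ) ∈ Set.Icc 0 T := ⟨le_refl 0, hT⟩
  have hTT : T ∈ Set.Icc (0:ℝ) T := ⟨hT, le_refl T⟩
  -- Lipschitz bounds for the trajectories
  have lip : ∀ (f : ℝ → ℝ) (f' : ℝ → ℝ), (∀ s ∈ Set.Icc 0 T, HasDerivAt f (f' s) s) →
      (∀ s ∈ Set.Icc 0 T, |f' s| ≤ 1) →
      ∀ s₁ ∈ Set.Icc 0 T, ∀ s₂ ∈ Set.Icc 0 T, |f s₂ - f s₁| ≤ |s₂ - s₁| := by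
    intro f f' hd hb s₁ hs₁ s₂ hs₂
    have key := Convex.norm_image_sub_le_of_norm_hasDerivWithin_le
      (fun r hr => (hd r hr).hasDerivWithinAt)
      (fun r hr => by rw [Real.norm_eq_abs]; exact hb r hr)
      (convex_Icc 0 T) hs₁ hs₂
    rw [Real.norm_eq_abs, Real.norm_eq_abs, one_mul] at key
    exact key
  have bnd_zs : ∀ s ∈ Set.Icc 0 T, ∀ i,
      |(-(kappa n pbar (zs s) (Pr s) i) / pbar i)| ≤ 1 := by
    intro s hs i
    rw [abs_div, abs_neg, abs_of_nonneg (kappa_nonneg pbar (zs s) hp (Pr s) i),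
      abs_of_pos (hp i), div_le_one (hp i)]
    exact kappa_le pbar (zs s) hp (Pr s) i
  have bnd_zt : ∀ s ∈ Set.Icc 0 T, ∀ i, |(-(u s i) / pbar i)| ≤ 1 := by
    intro s hs i
    rw [abs_div, abs_neg, abs_of_nonneg (hubox s hs i).1,
      abs_of_pos (hp i), div_le_one (hp i)]
    exact (hubox s hs i).2
  have lipzs : ∀ i, ∀ s₁ ∈ Set.Icc 0 T, ∀ s₂ ∈ Set.Icc 0 T,
      |zs s₂ i - zs s₁ i| ≤ |s₂ - s₁| := by
    intro i
    exact lip (fun r => zs r i) (fun r => -(kappa n pbar (zs r) (Pr r) i) / pbar i)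
      (fun r hr => hzsd r hr i) (fun r hr => bnd_zs r hr i)
  have lipzt : ∀ i, ∀ s₁ ∈ Set.Icc 0 T, ∀ s₂ ∈ Set.Icc 0 T,
      |zt s₂ i - zt s₁ i| ≤ |s₂ - s₁| := by
    intro i
    exact lip (fun r => zt r i) (fun r => -(u r i) / pbar i)
      (fun r hr => hztd r hr i) (fun r hr => bnd_zt r hr i)
  -- coordinate bounds
  have hzt00 : ∀ i, 0 ≤ zt 0 i := hztnn 0 h0T
  set M := T + 1 + ∑ i, zt 0 i with hM
  have hsum0 : 0 ≤ ∑ i, zt 0 i := Finset.sum_nonneg fun i _ => hzt00 i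
  have hM0 : 0 ≤ M := by rw [hM]; linarith
  have hub : ∀ s ∈ Set.Icc 0 T, ∀ i, zs s i ≤ M - 1 ∧ zt s i ≤ M - 1 ∧ -T ≤ zs s i := by
    intro s hs i
    have h1 := lipzs i 0 h0T s hs
    have h2 := lipzt i 0 h0T s hs
    have h3 : |s - 0| ≤ T := by
      rw [sub_zero, abs_of_nonneg hs.1]; exact hs.2
    have h4 : zt 0 i ≤ ∑ k, zt 0 k :=
      Finset.single_le_sum (fun k _ => hzt00 k) (Finset.mem_univ i)
    have h5 : zs 0 i = zt 0 i := by rw [h0]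
    have h6 := abs_le.1 (h1.trans h3)
    have h7 := abs_le.1 (h2.trans h3)
    refine ⟨by rw [hM]; linarith [h6.2], by rw [hM]; linarith [h7.2], ?_⟩
    have := hzt00 i
    linarith [h6.1]
  set Sp := ∑ i, pbar i with hSp
  have hSp0 : 0 ≤ Sp := Finset.sum_nonneg fun i _ => (hp i).le
  set Φ : ℝ → ℝ → ℝ :=
    fun s b => (∑ i, pbar i * min (zs s i) b) - ∑ i, pbar i * min (zt s i) b with hΦ
  have himgne : ∀ s, (Φ s '' Set.Icc 0 M).Nonempty :=
    fun s => ⟨Φ s 0, Set.mem_image_of_mem _ ⟨le_refl 0, hM0⟩⟩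
  have hΦlb : ∀ s ∈ Set.Icc 0 T, ∀ b ∈ Set.Icc (0:ℝ) M, -(Sp * (T + M)) ≤ Φ s b := by
    intro s hs b hb
    have t1 : ∀ i, pbar i * (-T) ≤ pbar i * min (zs s i) b := by
      intro i
      apply mul_le_mul_of_nonneg_left _ (hp i).le
      exact le_min (hub s hs i).2.2 (by linarith [hb.1, hT])
    have t2 : ∀ i, pbar i * min (zt s i) b ≤ pbar i * M := by
      intro i
      apply mul_le_mul_of_nonneg_left _ (hp i).le
      exact le_trans (min_le_right _ _) hb.2
    have s1 : Sp * (-T) ≤ ∑ i, pbar i * min (zs s i) b := by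
      rw [hSp, Finset.sum_mul]
      exact Finset.sum_le_sum fun i _ => t1 i
    have s2 : ∑ i, pbar i * min (zt s i) b ≤ Sp * M := by
      rw [hSp, Finset.sum_mul]
      exact Finset.sum_le_sum fun i _ => t2 i
    rw [hΦ]
    simp only
    nlinarith [hSp0]
  have hbdd : ∀ s ∈ Set.Icc 0 T, BddBelow (Φ s '' Set.Icc 0 M) := by
    intro s hs
    exact ⟨-(Sp * (T + M)), by rintro v ⟨b, hb, rfl⟩; exact hΦlb s hs b hb⟩
  set ψ : ℝ → ℝ := fun s => sInf (Φ s '' Set.Icc 0 M) with hψ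
  have hψle : ∀ s ∈ Set.Icc 0 T, ∀ b ∈ Set.Icc (0:ℝ) M, ψ s ≤ Φ s b :=
    fun s hs b hb => csInf_le (hbdd s hs) (Set.mem_image_of_mem _ hb)
  have hψge : ∀ s, ∀ c : ℝ, (∀ b ∈ Set.Icc (0:ℝ) M, c ≤ Φ s b) → c ≤ ψ s := by
    intro s c hc
    apply le_csInf (himgne s)
    rintro v ⟨b, hb, rfl⟩
    exact hc b hb
  have hψ0 : ψ 0 = 0 := by
    have hz : ∀ b : ℝ, Φ 0 b = 0 := by
      intro b
      rw [hΦ]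
      simp only [h0, sub_self]
    apply le_antisymm
    · have := hψle 0 h0T 0 ⟨le_refl 0, hM0⟩
      rw [hz 0] at this
      exact this
    · exact hψge 0 0 fun b hb => (hz b).ge
  have tri : ∀ x y : ℝ, |x - y| ≤ |x| + |y| := by
    intro x y
    calc |x - y| = |x + -y| := by rw [sub_eq_add_neg]
    _ ≤ |x| + |-y| := abs_add_le x (-y)
    _ = |x| + |y| := by rw [abs_neg]
  have hΦlip : ∀ b : ℝ, ∀ s₁ ∈ Set.Icc 0 T, ∀ s₂ ∈ Set.Icc 0 T,
      |Φ s₂ b - Φ s₁ b| ≤ (2*Sp) * |s₂ - s₁| := by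
    intro b s₁ hs₁ s₂ hs₂
    have per : ∀ (z : ℝ → Fin n → ℝ),
        (∀ i, ∀ r₁ ∈ Set.Icc 0 T, ∀ r₂ ∈ Set.Icc 0 T, |z r₂ i - z r₁ i| ≤ |r₂ - r₁|) →
        |(∑ i, pbar i * min (z s₂ i) b) - ∑ i, pbar i * min (z s₁ i) b|
          ≤ Sp * |s₂ - s₁| := by
      intro z hzlip
      rw [← Finset.sum_sub_distrib]
      calc |∑ i, (pbar i * min (z s₂ i) b - pbar i * min (z s₁ i) b)|
          ≤ ∑ i, |pbar i * min (z s₂ i) b - pbar i * min (z s₁ i) b| :=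
            Finset.abs_sum_le_sum_abs _ _
      _ ≤ ∑ i, pbar i * |s₂ - s₁| := by
          apply Finset.sum_le_sum
          intro i _
          rw [← mul_sub, abs_mul, abs_of_pos (hp i)]
          exact mul_le_mul_of_nonneg_left
            ((abs_min_sub_min _ _ _).trans (hzlip i s₁ hs₁ s₂ hs₂)) (hp i).le
      _ = Sp * |s₂ - s₁| := by rw [hSp, Finset.sum_mul]
    have p1 := per zs (fun i r₁ hr₁ r₂ hr₂ => lipzs i r₁ hr₁ r₂ hr₂)
    have p2 := per zt (fun i r₁ hr₁ r₂ hr₂ => lipzt i r₁ hr₁ r₂ hr₂)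
    have e : Φ s₂ b - Φ s₁ b
        = ((∑ i, pbar i * min (zs s₂ i) b) - ∑ i, pbar i * min (zs s₁ i) b)
          - ((∑ i, pbar i * min (zt s₂ i) b) - ∑ i, pbar i * min (zt s₁ i) b) := by
      rw [hΦ]; ring
    calc |Φ s₂ b - Φ s₁ b|
        ≤ |(∑ i, pbar i * min (zs s₂ i) b) - ∑ i, pbar i * min (zs s₁ i) b|
          + |(∑ i, pbar i * min (zt s₂ i) b) - ∑ i, pbar i * min (zt s₁ i) b| := by
          rw [e]; exact tri _ _
    _ ≤ (2*Sp) * |s₂ - s₁| := by linarith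
  have hψlipone : ∀ s₁ ∈ Set.Icc 0 T, ∀ s₂ ∈ Set.Icc 0 T,
      ψ s₁ - (2*Sp) * |s₂ - s₁| ≤ ψ s₂ := by
    intro s₁ hs₁ s₂ hs₂
    apply hψge
    intro b hb
    have h1 := (abs_le.1 (hΦlip b s₁ hs₁ s₂ hs₂)).1
    have h2 := hψle s₁ hs₁ b hb
    linarith
  set clamp : ℝ → ℝ := fun r => max 0 (min r T) with hclamp
  have hclampmem : ∀ r, clamp r ∈ Set.Icc 0 T :=
    fun r => ⟨le_max_left _ _, max_le hT (min_le_right _ _)⟩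
  have hclamplip : ∀ r₁ r₂ : ℝ, |clamp r₂ - clamp r₁| ≤ |r₂ - r₁| := by
    intro r₁ r₂
    have h1 : |min r₂ T - min r₁ T| ≤ |r₂ - r₁| := abs_min_sub_min _ _ _
    have h2 : |max (min r₂ T) 0 - max (min r₁ T) 0| ≤ |min r₂ T - min r₁ T| :=
      abs_max_sub_max _ _ _
    rw [hclamp]
    simp only [max_comm (0:ℝ)]
    exact h2.trans h1
  have hclampid : ∀ r ∈ Set.Icc 0 T, clamp r = r := by
    intro r hr
    rw [hclamp]
    simp only
    rw [min_eq_left hr.2, max_eq_right hr.1]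
  set g : ℝ → ℝ := fun r => ψ (clamp r) with hg
  have hgcont : Continuous g := by
    apply LipschitzWith.continuous (K := Real.toNNReal (2*Sp))
    apply LipschitzWith.of_dist_le_mul
    intro r₁ r₂
    rw [Real.dist_eq, Real.dist_eq, Real.coe_toNNReal _ (by linarith)]
    have e1 := hψlipone (clamp r₂) (hclampmem _) (clamp r₁) (hclampmem _)
    have e2 := hψlipone (clamp r₁) (hclampmem _) (clamp r₂) (hclampmem _)
    rw [abs_sub_comm] at e2
    have e3 := hclamplip r₂ r₁
    have e4 := hclamplip r₁ r₂
    rw [abs_sub_comm] at e4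
    have e5 : |g r₁ - g r₂| ≤ (2*Sp) * |clamp r₁ - clamp r₂| := by
      rw [hg]
      simp only
      rw [abs_le]
      constructor <;> nlinarith [abs_nonneg (clamp r₁ - clamp r₂)]
    calc |g r₁ - g r₂| ≤ (2*Sp) * |clamp r₁ - clamp r₂| := e5
    _ ≤ (2*Sp) * |r₁ - r₂| := mul_le_mul_of_nonneg_left e3 (by linarith)
  have hslope : ∀ s, 0 ≤ s → s < T → ∀ ε : ℝ, 0 < ε → ∃ h₁ > 0, ∀ h : ℝ, 0 < h → h ≤ h₁ →
      s + h ≤ T → ψ s - ε * h ≤ ψ (s + h) := by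
    intro s hs0 hsT ε hε
    have hs : s ∈ Set.Icc 0 T := ⟨hs0, hsT.le⟩
    set ε' := ε / (2*Sp + 1) with hε'
    have hε'0 : 0 < ε' := div_pos hε (by linarith)
    have ext : ∀ (f : ℝ → ℝ) (d : ℝ), HasDerivAt f d s → ∃ δ > 0, ∀ h : ℝ, 0 < h → h < δ →
        |f (s+h) - (f s + d * h)| ≤ ε' * h := by
      intro f d hd
      have h1 := hasDerivAt_iff_tendsto_slope.1 hd
      rw [Metric.tendsto_nhdsWithin_nhds] at h1
      obtain ⟨δ, hδ0, hδ⟩ := h1 ε' hε'0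
      refine ⟨δ, hδ0, ?_⟩
      intro h hh0 hhδ
      have hne : s + h ∈ {x : ℝ | x ≠ s} := by
        simp only [Set.mem_setOf_eq]
        intro hcon
        have : h = 0 := by linarith
        exact absurd this (ne_of_gt hh0)
      have hdist : dist (s+h) s < δ := by
        rw [Real.dist_eq, show s + h - s = h by ring, abs_of_pos hh0]
        exact hhδ
      have h2 := hδ hne hdist
      rw [Real.dist_eq] at h2
      have hsl : slope f s (s+h) = (f (s+h) - f s) / h := by
        rw [slope_def_field]
        congr 1
        ring
      rw [hsl] at h2
      have e : f (s+h) - (f s + d*h) = ((f (s+h) - f s)/h - d) * h := by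
        field_simp
        ring
      rw [e, abs_mul, abs_of_pos hh0]
      exact mul_le_mul_of_nonneg_right h2.le hh0.le
    have per : ∀ i : Fin n, ∃ δ > 0, ∀ h : ℝ, 0 < h → h < δ →
        |zs (s+h) i - (zs s i - kappa n pbar (zs s) (Pr s) i * h / pbar i)| ≤ ε' * h ∧
        |zt (s+h) i - (zt s i - u s i * h / pbar i)| ≤ ε' * h := by
      intro i
      obtain ⟨δ1, hδ10, hh1⟩ := ext (fun r => zs r i) _ (hzsd s hs i)
      obtain ⟨δ2, hδ20, hh2⟩ := ext (fun r => zt r i) _ (hztd s hs i)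
      refine ⟨min δ1 δ2, lt_min hδ10 hδ20, ?_⟩
      intro h hh0 hhδ
      constructor
      · have e2 : zs s i + (-(kappa n pbar (zs s) (Pr s) i) / pbar i) * h
            = zs s i - kappa n pbar (zs s) (Pr s) i * h / pbar i := by ring
        have := hh1 h hh0 (hhδ.trans_le (min_le_left _ _))
        rw [e2] at this
        exact this
      · have e2 : zt s i + (-(u s i) / pbar i) * h
            = zt s i - u s i * h / pbar i := by ring
        have := hh2 h hh0 (hhδ.trans_le (min_le_right _ _))
        rw [e2] at this
        exact this
    choose δf hδf0 hδf using per
    obtain ⟨δT, hδT0, hδT⟩ : ∃ δ > 0, ∀ h : ℝ, 0 < h → h < δ → ∀ i,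
        |zs (s+h) i - (zs s i - kappa n pbar (zs s) (Pr s) i * h / pbar i)| ≤ ε' * h ∧
        |zt (s+h) i - (zt s i - u s i * h / pbar i)| ≤ ε' * h := by
      rcases isEmpty_or_nonempty (Fin n) with hE | hNE
      · exact ⟨1, one_pos, fun h _ _ i => isEmptyElim i⟩
      · refine ⟨Finset.univ.inf' Finset.univ_nonempty δf, ?_, ?_⟩
        · rw [gt_iff_lt, Finset.lt_inf'_iff]
          exact fun i _ => hδf0 i
        · intro h hh0 hhδ i
          exact hδf i h hh0 (lt_of_lt_of_le hhδ (Finset.inf'_le _ (Finset.mem_univ i)))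
    set Vv : Finset ℝ := (Finset.univ.image (fun i => zs s i))
      ∪ (Finset.univ.image (fun i => zt s i)) with hVv
    set Dg : Finset ℝ := ((Vv ×ˢ Vv).filter (fun p => p.1 < p.2)).image
      (fun p => p.2 - p.1) with hDg
    have hDgpos : ∀ d ∈ Dg, 0 < d := by
      intro d hd
      rw [hDg] at hd
      obtain ⟨p, hp', rfl⟩ := Finset.mem_image.1 hd
      have := (Finset.mem_filter.1 hp').2
      linarith
    set h₀ : ℝ := if hne : Dg.Nonempty then Dg.min' hne else 1 with hh₀
    have hh₀0 : 0 < h₀ := by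
      rw [hh₀]
      split_ifs with hne
      · exact hDgpos _ (Dg.min'_mem hne)
      · exact one_pos
    have hgap : ∀ v₁ v₂ : ℝ, v₁ ∈ Vv → v₂ ∈ Vv → v₁ < v₂ → h₀ ≤ v₂ - v₁ := by
      intro v₁ v₂ h₁ h₂ hlt
      have hmem : v₂ - v₁ ∈ Dg := by
        rw [hDg]
        exact Finset.mem_image.2 ⟨(v₁, v₂), Finset.mem_filter.2
          ⟨Finset.mem_product.2 ⟨h₁, h₂⟩, hlt⟩, rfl⟩
      rw [hh₀, dif_pos ⟨_, hmem⟩]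
      exact Finset.min'_le _ _ hmem
    have hSEP : ∀ (h : ℝ), h ≤ h₀ → ∀ b v₁ v₂ : ℝ, v₁ ∈ Vv → v₂ ∈ Vv →
        b < v₁ → v₁ < b + h → b < v₂ → v₂ < b + h → v₁ = v₂ := by
      intro h hh b v₁ v₂ h₁ h₂ hb₁ hb₁' hb₂ hb₂'
      by_contra hne12
      rcases lt_or_gt_of_ne hne12 with hlt | hlt
      · have := hgap v₁ v₂ h₁ h₂ hlt
        linarith
      · have := hgap v₂ v₁ h₂ h₁ hlt
        linarith
    have hmemVzs : ∀ i, zs s i ∈ Vv := fun i =>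
      Finset.mem_union_left _ (Finset.mem_image.2 ⟨i, Finset.mem_univ i, rfl⟩)
    have hmemVzt : ∀ i, zt s i ∈ Vv := fun i =>
      Finset.mem_union_right _ (Finset.mem_image.2 ⟨i, Finset.mem_univ i, rfl⟩)
    refine ⟨min h₀ (δT/2), lt_min hh₀0 (by linarith), ?_⟩
    intro h hh0 hh1 hshT
    have hhh₀ : h ≤ h₀ := hh1.trans (min_le_left _ _)
    have hhδT : h < δT := lt_of_le_of_lt (hh1.trans (min_le_right _ _)) (by linarith)
    have hsh : s + h ∈ Set.Icc 0 T := ⟨by linarith, hshT⟩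
    apply hψge
    intro b hb
    have hdia := diamond pbar hp (zs s) (zt s) (u s) (Pr s)
      (fun i => (hubox s hs i).1) (fun i => (hubox s hs i).2) (husum s hs)
      b h hb.1 hh0
      (fun i j a1 a2 a3 a4 => hSEP h hhh₀ b _ _ (hmemVzs i) (hmemVzs j) a1 a2 a3 a4)
      (fun i j a1 a2 a3 a4 => hSEP h hhh₀ b _ _ (hmemVzt i) (hmemVzt j) a1 a2 a3 a4)
      (fun i j a1 a2 a3 a4 => hSEP h hhh₀ b _ _ (hmemVzs i) (hmemVzt j) a1 a2 a3 a4)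
    have happx : (∑ i, pbar i * min (zs s i - kappa n pbar (zs s) (Pr s) i * h / pbar i) b)
        - Sp * (ε' * h) ≤ ∑ i, pbar i * min (zs (s+h) i) b := by
      have perterm : ∀ i, pbar i * min (zs s i - kappa n pbar (zs s) (Pr s) i * h / pbar i) b
          - pbar i * (ε' * h) ≤ pbar i * min (zs (s+h) i) b := by
        intro i
        have h1 := (hδT h hh0 hhδT i).1
        have h2 := abs_min_sub_min (zs (s+h) i)
          (zs s i - kappa n pbar (zs s) (Pr s) i * h / pbar i) b
        have h3 := (abs_le.1 (h2.trans h1)).1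
        have h4 : min (zs s i - kappa n pbar (zs s) (Pr s) i * h / pbar i) b - ε' * h
            ≤ min (zs (s+h) i) b := by linarith
        have h5 := mul_le_mul_of_nonneg_left h4 (hp i).le
        nlinarith [h5]
      calc (∑ i, pbar i * min (zs s i - kappa n pbar (zs s) (Pr s) i * h / pbar i) b)
          - Sp * (ε' * h)
          = ∑ i, (pbar i * min (zs s i - kappa n pbar (zs s) (Pr s) i * h / pbar i) b
            - pbar i * (ε' * h)) := by
            rw [Finset.sum_sub_distrib, ← Finset.sum_mul, ← hSp]
      _ ≤ ∑ i, pbar i * min (zs (s+h) i) b := Finset.sum_le_sum fun i _ => perterm i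
    have happw : (∑ i, pbar i * min (zt (s+h) i) b)
        ≤ (∑ i, pbar i * min (zt s i - u s i * h / pbar i) b) + Sp * (ε' * h) := by
      have perterm : ∀ i, pbar i * min (zt (s+h) i) b
          ≤ pbar i * min (zt s i - u s i * h / pbar i) b + pbar i * (ε' * h) := by
        intro i
        have h1 := (hδT h hh0 hhδT i).2
        have h2 := abs_min_sub_min (zt (s+h) i) (zt s i - u s i * h / pbar i) b
        have h3 := (abs_le.1 (h2.trans h1)).2
        have h4 : min (zt (s+h) i) b ≤ min (zt s i - u s i * h / pbar i) b + ε' * h := by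
          linarith
        have h5 := mul_le_mul_of_nonneg_left h4 (hp i).le
        nlinarith [h5]
      calc (∑ i, pbar i * min (zt (s+h) i) b)
          ≤ ∑ i, (pbar i * min (zt s i - u s i * h / pbar i) b + pbar i * (ε' * h)) :=
            Finset.sum_le_sum fun i _ => perterm i
      _ = (∑ i, pbar i * min (zt s i - u s i * h / pbar i) b) + Sp * (ε' * h) := by
            rw [Finset.sum_add_distrib, ← Finset.sum_mul, ← hSp]
    have hmin2 : ψ s ≤ min (Φ s b) (Φ s (b+h)) := by
      apply le_min (hψle s hs b hb)
      by_cases hbh : b + h ≤ M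
      · exact hψle s hs (b+h) ⟨by linarith [hb.1], hbh⟩
      · push_neg at hbh
        have e1 : ∀ i, min (zs s i) (b+h) = min (zs s i) M := by
          intro i
          have := (hub s hs i).1
          rw [min_eq_left (by linarith), min_eq_left (by linarith)]
        have e2 : ∀ i, min (zt s i) (b+h) = min (zt s i) M := by
          intro i
          have := (hub s hs i).2.1
          rw [min_eq_left (by linarith), min_eq_left (by linarith)]
        have hEq : Φ s (b+h) = Φ s M := by
          rw [hΦ]
          simp only
          congr 1
          · exact Finset.sum_congr rfl (fun i _ => by rw [e1 i])
          · exact Finset.sum_congr rfl (fun i _ => by rw [e2 i])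
        rw [hEq]
        exact hψle s hs M ⟨hM0, le_refl M⟩
    have hεbound : Sp * (ε' * h) + Sp * (ε' * h) ≤ ε * h := by
      have key : ε' * (2*Sp) ≤ ε := by
        rw [hε', div_mul_eq_mul_div, div_le_iff₀ (by linarith)]
        nlinarith [hε.le, hSp0]
      nlinarith [key, hh0.le]
    have hΦb : Φ s b = (∑ i, pbar i * min (zs s i) b) - ∑ i, pbar i * min (zt s i) b := by
      rw [hΦ]
    have hΦbh : Φ s (b+h)
        = (∑ i, pbar i * min (zs s i) (b+h)) - ∑ i, pbar i * min (zt s i) (b+h) := by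
      rw [hΦ]
    have hΦsh : Φ (s+h) b
        = (∑ i, pbar i * min (zs (s+h) i) b) - ∑ i, pbar i * min (zt (s+h) i) b := by
      rw [hΦ]
    have hminle : min (Φ s b) (Φ s (b+h))
        ≤ (∑ i, pbar i * min (zs s i - kappa n pbar (zs s) (Pr s) i * h / pbar i) b)
          - ∑ i, pbar i * min (zt s i - u s i * h / pbar i) b := by
      rw [hΦb, hΦbh]
      exact hdia
    rw [hΦsh]
    have hminψ := le_min (hψle s hs b hb) (hψle s hs b hb)
    linarith [hmin2, hminle, happx, happw, hεbound]
  have hcompslope : ∀ s, 0 ≤ s → s < T → ∀ ε : ℝ, 0 < ε → ∃ h₁ > 0, ∀ h : ℝ, 0 < h →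
      h ≤ h₁ → s + h ≤ T → g s - ε * h ≤ g (s + h) := by
    intro s hs0 hsT ε hε
    obtain ⟨h₁, hh₁0, hh₁⟩ := hslope s hs0 hsT ε hε
    refine ⟨h₁, hh₁0, ?_⟩
    intro h hh0 hhh hshT
    have e1 : g s = ψ s := by rw [hg]; simp only; rw [hclampid s ⟨hs0, hsT.le⟩]
    have e2 : g (s+h) = ψ (s+h) := by
      rw [hg]; simp only; rw [hclampid (s+h) ⟨by linarith, hshT⟩]
    rw [e1, e2]
    exact hh₁ h hh0 hhh hshT
  have hg0 : g 0 = 0 := by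
    rw [hg]; simp only; rw [hclampid 0 h0T, hψ0]
  have hψT : 0 ≤ ψ T := by
    have hc := comparison hT hgcont hg0 hcompslope
    rw [hg] at hc; simp only at hc; rw [hclampid T hTT] at hc
    exact hc
  intro b hb
  rcases le_or_gt b M with hbM | hbM
  · have h1 := hψle T hTT b ⟨hb, hbM⟩
    have h2 : Φ T b = (∑ i, pbar i * min (zs T i) b) - ∑ i, pbar i * min (zt T i) b := by
      rw [hΦ]
    have h3 : 0 ≤ Φ T b := hψT.trans h1
    rw [h2] at h3
    linarith
  · have e1 : ∀ i, min (zs T i) b = min (zs T i) M := by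
      intro i
      have := (hub T hTT i).1
      rw [min_eq_left (by linarith), min_eq_left (by linarith)]
    have e2 : ∀ i, min (zt T i) b = min (zt T i) M := by
      intro i
      have := (hub T hTT i).2.1
      rw [min_eq_left (by linarith), min_eq_left (by linarith)]
    have h1 := hψle T hTT M ⟨hM0, le_refl M⟩
    have h3 : 0 ≤ Φ T M := hψT.trans h1
    have h2 : Φ T M = (∑ i, pbar i * min (zs T i) M) - ∑ i, pbar i * min (zt T i) M := by
      rw [hΦ]
    rw [h2] at h3
    have e3 : (∑ i, pbar i * min (zs T i) b) = ∑ i, pbar i * min (zs T i) M :=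
      Finset.sum_congr rfl (fun i _ => by rw [e1 i])
    have e4 : (∑ i, pbar i * min (zt T i) b) = ∑ i, pbar i * min (zt T i) M :=
      Finset.sum_congr rfl (fun i _ => by rw [e2 i])
    rw [e3, e4]
    linarith

end TTF

end TTFAux

/-- the policy maximises time to failure: after applying a feasible
reference on `[0, T]`, the time to failure from the policy's state dominates that from
the state of any other fulfilling solution, for every future reference signal. -/
theorem closedLoop_maximises_timeToFailure (n : ℕ) (pbar : Fin n → ℝ) (Pr : ℝ → ℝ)
    (T : ℝ) (hT : 0 ≤ T) (zt zs : ℝ → Fin n → ℝ) (hp : ∀ i, 0 < pbar i)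
    (hf : FulfilsOn n pbar Pr zt T)
    (h0 : zs 0 = zt 0) (hcl : ClosedLoopOn n pbar Pr zs T)
    (hnn : ∀ s ∈ Set.Icc 0 T, ∀ i, 0 ≤ zs s i) :
    ∀ Pr' : ℝ → ℝ,
      timeToFailure n pbar (zt T) Pr' ≤ timeToFailure n pbar (zs T) Pr' := by
  intro Pr'
  obtain ⟨u, hubox, husum, hztd, hztnn⟩ := hf
  have hztTnn : ∀ i, 0 ≤ zt T i := hztnn T ⟨hT, le_refl T⟩
  have hmaj : ∀ b : ℝ, 0 ≤ b →
      ∑ i, pbar i * min (zt T i) b ≤ ∑ i, pbar i * min (zs T i) b :=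
    TTF.majorize pbar hp Pr T hT zt zs u hubox husum hztnn hztd hcl h0
  obtain ⟨N, hN0, hrow, hcol, hEn⟩ :=
    TTF.matrix_exists pbar (zt T) (zs T) hp hztTnn hmaj
  rw [timeToFailure, timeToFailure]
  refine iSup₂_le ?_
  intro t ht
  obtain ⟨ht0, hfeas⟩ := ht
  have hfy : Feasible n pbar (zs T) (trunc Pr' t) :=
    TTF.feasible_transfer pbar (zt T) (zs T) hp N hN0 hrow hcol hEn _ hfeas
  exact le_iSup₂ (f := fun (t : ℝ)
    (_ : t ∈ {t : ℝ | 0 ≤ t ∧ Feasible n pbar (zs T) (trunc Pr' t)}) =>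
    ENNReal.ofReal t) t ⟨ht0, hfy⟩
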